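/- arXiv:2312.08562 — 6 statements merged into one kernel-verified Lean document; each statement's English description precedes it below -/
import Mathlib

section
/- There exists a graph E (two parallel edges e₁, e₂ from v to w) and a graph F (a loop e at v plus an edge g from v to w) with a vertex-injective path homomorphism f given by f(e₁) = g, f(e₂) = eg, such that f satisfies the monotonicity condition on edges, but the induced path homomorphism f̄ : FP(Ē) → FP(F̄) between the extended (double) graphs fails the monotonicity condition: f̄(e₁*) = g* ⪯ g*e* = f̄(e₂*) while e₁* ≠ e₂*. -/
/-- A directed graph. -/
structure DirGraph where
  V : Type
  E : Type
  src : E → V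
  tgt : E → V

namespace DirGraph

/-- Finite paths from `v` to `w` in a graph. -/
inductive Path (G : DirGraph) : G.V → G.V → Type
  | nil (v : G.V) : Path G v v
  | cons (e : G.E) {w : G.V} (p : Path G (G.tgt e) w) : Path G (G.src e) w

/-- Concatenation of composable indexed paths. -/
def Path.comp {G : DirGraph} : ∀ {a b c : G.V}, G.Path a b → G.Path b c → G.Path a c
  | _, _, _, .nil _, q => q
  | _, _, _, .cons e p, q => .cons e (p.comp q)

/-- The list of edges of a path. -/
def Path.edges {G : DirGraph} : ∀ {a b : G.V}, G.Path a b → List G.E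
  | _, _, .nil _ => []
  | _, _, .cons e p => e :: p.edges

/-- The set of all finite paths of a graph (with arbitrary endpoints). -/
def FP (G : DirGraph) : Type := Σ (v : G.V) (w : G.V), G.Path v w

/-- The source (beginning) of a finite path. -/
def FP.src {G : DirGraph} (p : G.FP) : G.V := p.1

/-- The target (end) of a finite path. -/
def FP.tgt {G : DirGraph} (p : G.FP) : G.V := p.2.1

/-- The list of edges of a finite path. -/
def FP.edges {G : DirGraph} (p : G.FP) : List G.E := p.2.2.edges

/-- The length of a finite path. -/
def FP.length {G : DirGraph} (p : G.FP) : ℕ := p.edges.length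

/-- A vertex, viewed as a length-zero finite path. -/
def FP.ofVertex {G : DirGraph} (v : G.V) : G.FP := ⟨v, v, .nil v⟩

/-- An edge, viewed as a length-one finite path. -/
def FP.ofEdge {G : DirGraph} (e : G.E) : G.FP :=
  ⟨G.src e, G.tgt e, .cons e (.nil (G.tgt e))⟩

/-- Concatenation of composable finite paths. -/
def FP.comp {G : DirGraph} (p q : G.FP) (h : p.tgt = q.src) : G.FP :=
  ⟨p.1, q.2.1, p.2.2.comp (cast (congrArg (fun x => G.Path x q.2.1) h.symm) q.2.2)⟩

/-- The prefix (extension) relation `α ⪯ β` on finite paths: `β = αγ` for some path `γ`. -/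
def FP.le {G : DirGraph} (p q : G.FP) : Prop :=
  ∃ (r : G.FP) (h : p.tgt = r.src), q = p.comp r h

/-- A path homomorphism of graphs: a map on finite paths sending vertices to
vertices, intertwining the extended source and target maps, and preserving
concatenation of composable paths. -/
def IsPathHom {G H : DirGraph} (f : G.FP → H.FP) : Prop :=
  (∀ v : G.V, ∃ w : H.V, f (FP.ofVertex v) = FP.ofVertex w) ∧
  (∀ p : G.FP, f (FP.ofVertex p.src) = FP.ofVertex (f p).src) ∧
  (∀ p : G.FP, f (FP.ofVertex p.tgt) = FP.ofVertex (f p).tgt) ∧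
  (∀ (p q : G.FP) (h : p.tgt = q.src),
    ∃ h' : (f p).tgt = (f q).src, f (p.comp q h) = (f p).comp (f q) h')

/-- A map on finite paths is vertex-injective if it is injective on vertices. -/
def VertexInjective {G H : DirGraph} (f : G.FP → H.FP) : Prop :=
  Function.Injective (fun v : G.V => f (FP.ofVertex v))

/-- The monotonicity condition on edges: `f(e) ⪯ f(e′)` implies `e = e′`. -/
def EdgeMonotone {G H : DirGraph} (f : G.FP → H.FP) : Prop :=
  ∀ e e' : G.E, FP.le (f (FP.ofEdge e)) (f (FP.ofEdge e')) → e = e'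

end DirGraph

namespace DirGraph

/-- The extended (double) graph `Ē` of `E`: same vertices, edges `E¹ ⊔ (E¹)*`,
with `s(e*) = t(e)` and `t(e*) = s(e)`. -/
def ext (G : DirGraph) : DirGraph where
  V := G.V
  E := G.E ⊕ G.E
  src := Sum.elim G.src G.tgt
  tgt := Sum.elim G.tgt G.src

/-- The canonical inclusion of paths of `E` into paths of the extended graph `Ē`. -/
def Path.inclExt {G : DirGraph} : ∀ {v w : G.V}, G.Path v w → G.ext.Path v w
  | _, _, .nil v => Path.nil (G := G.ext) v
  | _, _, .cons e p => Path.cons (G := G.ext) (Sum.inl e) p.inclExt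

/-- The star (reversal) of a path of `E`, as a path of the extended graph `Ē`:
`(e₁…eₙ)* = eₙ*…e₁*`. -/
def Path.star {G : DirGraph} : ∀ {v w : G.V}, G.Path v w → G.ext.Path w v
  | _, _, .nil v => Path.nil (G := G.ext) v
  | _, _, .cons e p =>
      Path.comp p.star (Path.cons (G := G.ext) (Sum.inr e) (Path.nil (G := G.ext) (G.src e)))

/-- The canonical inclusion `FP(E) → FP(Ē)`. -/
def FP.inclExt {G : DirGraph} (p : G.FP) : G.ext.FP := ⟨p.1, p.2.1, p.2.2.inclExt⟩

/-- The star `p ↦ p*` of finite paths, `FP(E) → FP(Ē)`. -/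
def FP.star {G : DirGraph} (p : G.FP) : G.ext.FP := ⟨p.2.1, p.1, p.2.2.star⟩

/-- `fbar` is the path homomorphism `Ē → F̄` of extended graphs induced by a
path homomorphism `f : E → F`: it is a path homomorphism agreeing with `f` on
vertices and satisfying `f̄(e) = f(e)` and `f̄(e*) = f(e)*` on the two kinds of
edges of `Ē`. -/
def IsBar {G H : DirGraph} (f : G.FP → H.FP) (fbar : G.ext.FP → H.ext.FP) : Prop :=
  IsPathHom fbar ∧
  (∀ (v : G.V) (w : H.V), f (FP.ofVertex v) = FP.ofVertex w →
    fbar (FP.ofVertex (G := G.ext) v) = FP.ofVertex (G := H.ext) w) ∧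
  (∀ e : G.E, fbar (FP.ofEdge (G := G.ext) (Sum.inl e)) = FP.inclExt (f (FP.ofEdge e))) ∧
  (∀ e : G.E, fbar (FP.ofEdge (G := G.ext) (Sum.inr e)) = FP.star (f (FP.ofEdge e)))

end DirGraph

namespace DirGraph

/-- The graph `E` with two vertices `v = false`, `w = true` and two parallel
edges `e₁ = false`, `e₂ = true` from `v` to `w`. -/
def E8 : DirGraph where
  V := Bool
  E := Bool
  src := fun _ => false
  tgt := fun _ => true

/-- The graph `F` with two vertices `v = false`, `w = true`, a loop
`e = true` at `v`, and an edge `g = false` from `v` to `w`. -/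
def F8 : DirGraph where
  V := Bool
  E := Bool
  src := fun _ => false
  tgt := fun b => !b

end DirGraph

namespace DirGraph

/-- Image path of an `E8`-edge in `F8`. -/
def pmap8 : Bool → F8.Path false true
  | false => Path.cons (G := F8) false (Path.nil (G := F8) true)
  | true => Path.cons (G := F8) true (Path.cons (G := F8) false (Path.nil (G := F8) true))

/-- The map on paths underlying our homomorphism. -/
def fmap8 : ∀ {a b : Bool}, E8.Path a b → F8.Path a b
  | _, _, .nil v => Path.nil (G := F8) v
  | _, _, .cons e p => (pmap8 e).comp (fmap8 p)

/-- The homomorphism `f : FP(E8) → FP(F8)`. -/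
def f8 (p : E8.FP) : F8.FP := ⟨p.1, p.2.1, fmap8 p.2.2⟩

theorem Path.comp_assoc {G : DirGraph} {a b c d : G.V} (p : G.Path a b) (q : G.Path b c)
    (r : G.Path c d) : (p.comp q).comp r = p.comp (q.comp r) := by
  induction p with
  | nil => rfl
  | cons e p ih => simp [Path.comp, ih]

theorem fmap8_comp : ∀ {a b c : E8.V} (p : E8.Path a b) (q : E8.Path b c),
    fmap8 (p.comp q) = (fmap8 p).comp (fmap8 q) := by
  intro a b c p q
  induction p with
  | nil => rfl
  | cons e p ih => exact (congrArg (pmap8 e).comp (ih q)).trans (Path.comp_assoc _ _ _).symm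

theorem Path.comp_edges {G : DirGraph} {a b c : G.V} (p : G.Path a b) (q : G.Path b c) :
    (p.comp q).edges = p.edges ++ q.edges := by
  induction p with
  | nil => rfl
  | cons e p ih => simp [Path.comp, Path.edges, ih]

theorem FP.comp_edges {G : DirGraph} (p q : G.FP) (h : p.tgt = q.src) :
    (p.comp q h).edges = p.edges ++ q.edges := by
  obtain ⟨a, b, pp⟩ := p
  obtain ⟨c, d, qq⟩ := q
  have h' : b = c := h
  subst h'
  exact Path.comp_edges pp qq

end DirGraph

open DirGraph in
/-- There is a vertex-injective path homomorphism `f : E → F` (with `E` two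
parallel edges `e₁, e₂ : v → w` and `F` a loop `e` at `v` plus an edge
`g : v → w`) given by `f(e₁) = g` and `f(e₂) = eg`, which satisfies the
monotonicity condition on edges, while the induced path homomorphism
`f̄ : FP(Ē) → FP(F̄)` of extended graphs fails it:
`f̄(e₁*) = g* ⪯ g*e* = f̄(e₂*)` although `e₁* ≠ e₂*`. -/
theorem bar_of_monotone_not_monotone :
    ∃ f : E8.FP → F8.FP,
      IsPathHom f ∧ VertexInjective f ∧ EdgeMonotone f ∧
      f (FP.ofEdge false) = FP.ofEdge false ∧
      f (FP.ofEdge true) = FP.comp (FP.ofEdge (G := F8) true) (FP.ofEdge (G := F8) false) rfl ∧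
      ∀ fbar : E8.ext.FP → F8.ext.FP, IsBar f fbar →
        FP.le (fbar (FP.ofEdge (G := E8.ext) (Sum.inr false)))
            (fbar (FP.ofEdge (G := E8.ext) (Sum.inr true))) ∧
        (Sum.inr false : E8.ext.E) ≠ Sum.inr true ∧
        ¬ EdgeMonotone fbar := by
  refine ⟨f8, ⟨?_, ?_, ?_, ?_⟩, ?_, ?_, rfl, rfl, ?_⟩
  · intro v; exact ⟨v, rfl⟩
  · intro p; rfl
  · intro p; rfl
  · rintro ⟨a, b, pp⟩ ⟨c, d, qq⟩ h
    have h' : b = c := h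
    subst h'
    exact ⟨rfl, by simp only [FP.comp, f8]; rw [fmap8_comp]; rfl⟩
  · intro v w h
    exact congrArg (fun p : F8.FP => p.1) h
  · intro e e' hle
    obtain ⟨r, h, hr⟩ := hle
    have hed := congrArg FP.edges hr
    rw [FP.comp_edges] at hed
    revert hed
    cases e <;> cases e' <;>
      simp_all [f8, FP.ofEdge, FP.edges, fmap8, pmap8, Path.comp, Path.edges, E8, F8]
    all_goals intro hh; exact Bool.noConfusion (List.cons.inj hh).1
  · intro fbar ⟨_, _, _, hstar⟩
    have h0 := hstar false
    have h1 := hstar true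
    have hle : FP.le (fbar (FP.ofEdge (G := E8.ext) (Sum.inr false)))
        (fbar (FP.ofEdge (G := E8.ext) (Sum.inr true))) := by
      rw [h0, h1]
      exact ⟨FP.ofEdge (G := F8.ext) (Sum.inr true), rfl, rfl⟩
    refine ⟨hle, fun h => Bool.noConfusion (Sum.inr.inj h), fun hmono => ?_⟩
    have h2 : (false : Bool) = true := Sum.inr.inj (hmono _ _ hle)
    exact Bool.noConfusion h2
end

section
/- Let f : FP(E) → FP(F) be a vertex-injective path homomorphism satisfying the monotonicity condition on edges, and let e, e′ be distinct edges of E with the same source. Then neither f(e) nor f(e′) is a vertex, both are paths of positive length, and there is an index i ≤ min(len f(e), len f(e′)) at which the i-th edges of f(e) and f(e′) differ. -/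
/-- A directed graph. -/
structure DGraph where
  V : Type
  E : Type
  src : E → V
  tgt : E → V

namespace DGraph

/-- Finite paths from `v` to `w` in a graph. -/
inductive Path (G : DGraph) : G.V → G.V → Type
  | nil (v : G.V) : Path G v v
  | cons (e : G.E) {w : G.V} (p : Path G (G.tgt e) w) : Path G (G.src e) w

/-- Concatenation of composable indexed paths. -/
def Path.comp {G : DGraph} : ∀ {a b c : G.V}, G.Path a b → G.Path b c → G.Path a c
  | _, _, _, .nil _, q => q
  | _, _, _, .cons e p, q => .cons e (p.comp q)

/-- The list of edges of a path. -/
def Path.edges {G : DGraph} : ∀ {a b : G.V}, G.Path a b → List G.E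
  | _, _, .nil _ => []
  | _, _, .cons e p => e :: p.edges

/-- The set of all finite paths of a graph (with arbitrary endpoints). -/
def FP (G : DGraph) : Type := Σ (v : G.V) (w : G.V), G.Path v w

/-- The source (beginning) of a finite path. -/
def FP.src {G : DGraph} (p : G.FP) : G.V := p.1

/-- The target (end) of a finite path. -/
def FP.tgt {G : DGraph} (p : G.FP) : G.V := p.2.1

/-- The list of edges of a finite path. -/
def FP.edges {G : DGraph} (p : G.FP) : List G.E := p.2.2.edges

/-- The length of a finite path. -/
def FP.length {G : DGraph} (p : G.FP) : ℕ := p.edges.length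

/-- A vertex, viewed as a length-zero finite path. -/
def FP.ofVertex {G : DGraph} (v : G.V) : G.FP := ⟨v, v, .nil v⟩

/-- An edge, viewed as a length-one finite path. -/
def FP.ofEdge {G : DGraph} (e : G.E) : G.FP :=
  ⟨G.src e, G.tgt e, .cons e (.nil (G.tgt e))⟩

/-- Concatenation of composable finite paths. -/
def FP.comp {G : DGraph} (p q : G.FP) (h : p.tgt = q.src) : G.FP :=
  ⟨p.1, q.2.1, p.2.2.comp (cast (congrArg (fun x => G.Path x q.2.1) h.symm) q.2.2)⟩

/-- The prefix (extension) relation `α ⪯ β` on finite paths: `β = αγ` for some path `γ`. -/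
def FP.le {G : DGraph} (p q : G.FP) : Prop :=
  ∃ (r : G.FP) (h : p.tgt = r.src), q = p.comp r h

/-- A path homomorphism of graphs: a map on finite paths sending vertices to
vertices, intertwining the extended source and target maps, and preserving
concatenation of composable paths. -/
def IsPathHom {G H : DGraph} (f : G.FP → H.FP) : Prop :=
  (∀ v : G.V, ∃ w : H.V, f (FP.ofVertex v) = FP.ofVertex w) ∧
  (∀ p : G.FP, f (FP.ofVertex p.src) = FP.ofVertex (f p).src) ∧
  (∀ p : G.FP, f (FP.ofVertex p.tgt) = FP.ofVertex (f p).tgt) ∧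
  (∀ (p q : G.FP) (h : p.tgt = q.src),
    ∃ h' : (f p).tgt = (f q).src, f (p.comp q h) = (f p).comp (f q) h')

/-- A map on finite paths is vertex-injective if it is injective on vertices. -/
def VertexInjective {G H : DGraph} (f : G.FP → H.FP) : Prop :=
  Function.Injective (fun v : G.V => f (FP.ofVertex v))

/-- The monotonicity condition on edges: `f(e) ⪯ f(e′)` implies `e = e′`. -/
def EdgeMonotone {G H : DGraph} (f : G.FP → H.FP) : Prop :=
  ∀ e e' : G.E, FP.le (f (FP.ofEdge e)) (f (FP.ofEdge e')) → e = e'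

end DGraph

namespace DGraph

lemma FP.ofVertex_inj {G : DGraph} {v w : G.V} (h : FP.ofVertex v = FP.ofVertex w) : v = w := by
  have := congrArg FP.src h
  simpa [FP.ofVertex, FP.src] using this

lemma FP.eq_ofVertex_of_length_zero {G : DGraph} (p : G.FP) (h : p.length = 0) :
    p = FP.ofVertex p.src := by
  obtain ⟨v, w, P⟩ := p
  cases P with
  | nil v => rfl
  | cons e P => simp [FP.length, FP.edges, Path.edges] at h

lemma FP.vertex_le {G : DGraph} (q : G.FP) : (FP.ofVertex q.src).le q :=
  ⟨q, rfl, rfl⟩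

lemma Path.prefix_comp_aux {G : DGraph} : ∀ {a b c : G.V} (p : G.Path a b)
    {a' : G.V} (q : G.Path a' c) (h : a = a'), p.edges <+: q.edges →
    ∃ r : G.Path b c, q = cast (by rw [h]) (p.comp r) := by
  intro a b c p
  induction p with
  | nil v =>
    intro a' q h _
    subst h
    exact ⟨q, rfl⟩
  | cons e p ih =>
    intro a' q h hpre
    cases q with
    | nil v => simp [Path.edges] at hpre
    | cons e₁ q₁ =>
      rw [Path.edges, Path.edges, List.cons_prefix_cons] at hpre
      obtain ⟨rfl, hpre⟩ := hpre
      obtain ⟨r, hr⟩ := ih q₁ rfl hpre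
      refine ⟨r, ?_⟩
      rw [cast_eq] at hr
      rw [cast_eq, hr]
      rfl

lemma FP.le_of_prefix {G : DGraph} (p q : G.FP) (hs : p.src = q.src)
    (h : p.edges <+: q.edges) : p.le q := by
  obtain ⟨v, w, P⟩ := p
  obtain ⟨v', w', Q⟩ := q
  obtain rfl : v = v' := hs
  obtain ⟨r, hr⟩ := Path.prefix_comp_aux P Q rfl h
  rw [cast_eq] at hr
  exact ⟨⟨w, w', r⟩, rfl, by simp [FP.comp, hr]; rfl⟩

end DGraph

open DGraph in
/-- If `f` is a vertex-injective monotone path homomorphism and `e ≠ e′` are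
distinct edges with the same source, then neither `f(e)` nor `f(e′)` is a
vertex (both have positive length) and there is an index
`i < min (len f(e)) (len f(e′))` at which the `i`-th edges of `f(e)` and
`f(e′)` differ. -/
theorem distinct_coinitial_edges_images_differ (G H : DGraph) (f : G.FP → H.FP)
    (hf : IsPathHom f) (hv : VertexInjective f) (hm : EdgeMonotone f)
    (e e' : G.E) (hne : e ≠ e') (hsrc : G.src e = G.src e') :
    0 < (f (FP.ofEdge e)).length ∧ 0 < (f (FP.ofEdge e')).length ∧
    ∃ i, i < min (f (FP.ofEdge e)).length (f (FP.ofEdge e')).length ∧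
      (f (FP.ofEdge e)).edges[i]? ≠ (f (FP.ofEdge e')).edges[i]? := by
  set p := f (FP.ofEdge e) with hp
  set q := f (FP.ofEdge e') with hq
  have hsp : p.src = q.src := by
    apply FP.ofVertex_inj
    have h1 := hf.2.1 (FP.ofEdge e)
    have h2 := hf.2.1 (FP.ofEdge e')
    rw [← h1, ← h2]
    show f (FP.ofVertex (G.src e)) = f (FP.ofVertex (G.src e'))
    rw [hsrc]
  have hlp : 0 < p.length := by
    rcases Nat.eq_zero_or_pos p.length with hl | hl
    · exfalso
      have hpv : p = FP.ofVertex q.src := by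
        rw [FP.eq_ofVertex_of_length_zero p hl, hsp]
      have : p.le q := by rw [hpv]; exact FP.vertex_le q
      exact hne (hm e e' this)
    · exact hl
  have hlq : 0 < q.length := by
    rcases Nat.eq_zero_or_pos q.length with hl | hl
    · exfalso
      have hqv : q = FP.ofVertex p.src := by
        rw [FP.eq_ofVertex_of_length_zero q hl, hsp]
      have : q.le p := by rw [hqv]; exact FP.vertex_le p
      exact hne (hm e' e this).symm
    · exact hl
  refine ⟨hlp, hlq, ?_⟩
  by_contra hcon
  push_neg at hcon
  rcases le_total p.length q.length with hle | hle
  · have hpre : p.edges <+: q.edges := by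
      have ht : q.edges.take p.length = p.edges := by
        apply List.ext_getElem?
        intro i
        rcases lt_or_ge i p.length with hi | hi
        · rw [List.getElem?_take, if_pos hi]
          exact (hcon i (by omega)).symm
        · rw [List.getElem?_eq_none (by simp [FP.length] at hi ⊢; omega),
            List.getElem?_eq_none (by simpa [FP.length] using hi)]
      exact ht ▸ List.take_prefix _ _
    exact hne (hm e e' (FP.le_of_prefix p q hsp hpre))
  · have hpre : q.edges <+: p.edges := by
      have ht : p.edges.take q.length = q.edges := by
        apply List.ext_getElem?
        intro i
        rcases lt_or_ge i q.length with hi | hi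
        · rw [List.getElem?_take, if_pos hi]
          exact hcon i (by omega)
        · rw [List.getElem?_eq_none (by simp [FP.length] at hi ⊢; omega),
            List.getElem?_eq_none (by simpa [FP.length] using hi)]
      exact ht ▸ List.take_prefix _ _
    exact hne (hm e' e (FP.le_of_prefix q p hsp.symm hpre)).symm
end

section
/- Let f : FP(E) → FP(F) be a vertex-injective path homomorphism satisfying the monotonicity condition on edges. Then f_*^C : C_k(E) → C_k(F), defined on generators by [χ_p] ↦ [χ_{f̄(p)}] for p ∈ FP(Ē), is a well-defined k-algebra homomorphism between Cohn path algebras; the assignment is functorial, and it is unital when E, F have finitely many vertices and f is bijective on vertices. -/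
namespace DGraph

/-- The extended (double) graph `Ē` of `E`: same vertices, edges `E¹ ⊔ (E¹)*`,
with `s(e*) = t(e)` and `t(e*) = s(e)`. -/
def ext (G : DGraph) : DGraph where
  V := G.V
  E := G.E ⊕ G.E
  src := Sum.elim G.src G.tgt
  tgt := Sum.elim G.tgt G.src

/-- The canonical inclusion of paths of `E` into paths of the extended graph `Ē`. -/
def Path.inclExt {G : DGraph} : ∀ {v w : G.V}, G.Path v w → G.ext.Path v w
  | _, _, .nil v => Path.nil (G := G.ext) v
  | _, _, .cons e p => Path.cons (G := G.ext) (Sum.inl e) p.inclExt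

/-- The star (reversal) of a path of `E`, as a path of the extended graph `Ē`:
`(e₁…eₙ)* = eₙ*…e₁*`. -/
def Path.star {G : DGraph} : ∀ {v w : G.V}, G.Path v w → G.ext.Path w v
  | _, _, .nil v => Path.nil (G := G.ext) v
  | _, _, .cons e p =>
      Path.comp p.star (Path.cons (G := G.ext) (Sum.inr e) (Path.nil (G := G.ext) (G.src e)))

/-- The canonical inclusion `FP(E) → FP(Ē)`. -/
def FP.inclExt {G : DGraph} (p : G.FP) : G.ext.FP := ⟨p.1, p.2.1, p.2.2.inclExt⟩

/-- The star `p ↦ p*` of finite paths, `FP(E) → FP(Ē)`. -/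
def FP.star {G : DGraph} (p : G.FP) : G.ext.FP := ⟨p.2.1, p.1, p.2.2.star⟩

/-- `fbar` is the path homomorphism `Ē → F̄` of extended graphs induced by a
path homomorphism `f : E → F`: it is a path homomorphism agreeing with `f` on
vertices and satisfying `f̄(e) = f(e)` and `f̄(e*) = f(e)*` on the two kinds of
edges of `Ē`. -/
def IsBar {G H : DGraph} (f : G.FP → H.FP) (fbar : G.ext.FP → H.ext.FP) : Prop :=
  IsPathHom fbar ∧
  (∀ (v : G.V) (w : H.V), f (FP.ofVertex v) = FP.ofVertex w →
    fbar (FP.ofVertex (G := G.ext) v) = FP.ofVertex (G := H.ext) w) ∧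
  (∀ e : G.E, fbar (FP.ofEdge (G := G.ext) (Sum.inl e)) = FP.inclExt (f (FP.ofEdge e))) ∧
  (∀ e : G.E, fbar (FP.ofEdge (G := G.ext) (Sum.inr e)) = FP.star (f (FP.ofEdge e)))

end DGraph

namespace DGraph

/-- Generators of the Cohn/Leavitt path algebra of `G`: a generator `χ_v` for
each vertex, `χ_e` and `χ_{e*}` for each edge. -/
def Gen (G : DGraph) : Type := G.V ⊕ G.E ⊕ G.E

/-- The generator of the Cohn/Leavitt path algebra corresponding to an edge of
the extended graph `Ḡ`. -/
def genOfExtEdge {G : DGraph} (x : G.ext.E) : Gen G :=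
  Sum.elim (fun e => Sum.inr (Sum.inl e)) (fun e => Sum.inr (Sum.inr e)) x

/-- The relations defining the Cohn path algebra as a quotient of the free
algebra on the generators `χ_v, χ_e, χ_{e*}`: the path-algebra relations
`χ_v χ_w = δ_{v,w} χ_v`, `χ_{s(e)} χ_e = χ_e = χ_e χ_{t(e)}`,
`χ_{t(e)} χ_{e*} = χ_{e*} = χ_{e*} χ_{s(e)}`, together with the first
Cuntz–Krieger relation `χ_{e*} χ_f = δ_{e,f} χ_{t(e)}`. -/
inductive CohnRel (k : Type) [Field k] (G : DGraph) :
    FreeAlgebra k (Gen G) → FreeAlgebra k (Gen G) → Prop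
  | vtx (v w : G.V) [Decidable (v = w)] :
      CohnRel k G (FreeAlgebra.ι k (Sum.inl v) * FreeAlgebra.ι k (Sum.inl w))
        (if v = w then FreeAlgebra.ι k (Sum.inl v) else 0)
  | src_edge (e : G.E) :
      CohnRel k G (FreeAlgebra.ι k (Sum.inl (G.src e)) * FreeAlgebra.ι k (Sum.inr (Sum.inl e)))
        (FreeAlgebra.ι k (Sum.inr (Sum.inl e)))
  | edge_tgt (e : G.E) :
      CohnRel k G (FreeAlgebra.ι k (Sum.inr (Sum.inl e)) * FreeAlgebra.ι k (Sum.inl (G.tgt e)))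
        (FreeAlgebra.ι k (Sum.inr (Sum.inl e)))
  | tgt_star (e : G.E) :
      CohnRel k G (FreeAlgebra.ι k (Sum.inl (G.tgt e)) * FreeAlgebra.ι k (Sum.inr (Sum.inr e)))
        (FreeAlgebra.ι k (Sum.inr (Sum.inr e)))
  | star_src (e : G.E) :
      CohnRel k G (FreeAlgebra.ι k (Sum.inr (Sum.inr e)) * FreeAlgebra.ι k (Sum.inl (G.src e)))
        (FreeAlgebra.ι k (Sum.inr (Sum.inr e)))
  | cohn (e f : G.E) [Decidable (e = f)] :
      CohnRel k G (FreeAlgebra.ι k (Sum.inr (Sum.inr e)) * FreeAlgebra.ι k (Sum.inr (Sum.inl f)))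
        (if e = f then FreeAlgebra.ι k (Sum.inl (G.tgt e)) else 0)

/-- The Cohn path algebra `C_k(G)`. -/
def CohnAlg (k : Type) [Field k] (G : DGraph) : Type := RingQuot (CohnRel k G)

noncomputable instance (k : Type) [Field k] (G : DGraph) : Ring (CohnAlg k G) :=
  inferInstanceAs (Ring (RingQuot (CohnRel k G)))

noncomputable instance (k : Type) [Field k] (G : DGraph) : Algebra k (CohnAlg k G) :=
  inferInstanceAs (Algebra k (RingQuot (CohnRel k G)))

/-- The element of the free algebra on the generators given by a finite path of
the extended graph: `χ_v` for the length-zero path at `v`, and the product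
`χ_{x₁} ⋯ χ_{xₙ}` for a path `x₁…xₙ` of positive length. -/
noncomputable def freeOfFP (k : Type) [Field k] {G : DGraph} (p : G.ext.FP) :
    FreeAlgebra k (Gen G) :=
  if p.edges.isEmpty then FreeAlgebra.ι k (Sum.inl (p.src : G.V))
  else (p.edges.map fun x => FreeAlgebra.ι k (genOfExtEdge x)).prod

/-- The class `[χ_p]` in the Cohn path algebra of a finite path `p` of the
extended graph. -/
noncomputable def cohnPathElem (k : Type) [Field k] {G : DGraph} (p : G.ext.FP) :
    CohnAlg k G :=
  RingQuot.mkAlgHom k (CohnRel k G) (freeOfFP k p)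

end DGraph

namespace DGraph

open FreeAlgebra

/-- mkAlgHom landing in `CohnAlg`. -/
noncomputable def mkc (k : Type) [Field k] (H : DGraph) :
    FreeAlgebra k (Gen H) →ₐ[k] CohnAlg k H := RingQuot.mkAlgHom k (CohnRel k H)

variable {k : Type} [Field k] {H : DGraph}

lemma rel_eq {x y : FreeAlgebra k (Gen H)} (h : CohnRel k H x y) :
    mkc k H x = mkc k H y := RingQuot.mkAlgHom_rel k h

lemma elem_ofVertex (v : H.ext.V) :
    cohnPathElem k (FP.ofVertex (G := H.ext) v) = mkc k H (ι k (Sum.inl v)) := rfl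

lemma elem_nil (v : H.ext.V) :
    cohnPathElem k (⟨v, v, .nil v⟩ : H.ext.FP) = mkc k H (ι k (Sum.inl v)) := rfl

lemma elem_ofEdge (x : H.ext.E) :
    cohnPathElem k (FP.ofEdge (G := H.ext) x) = mkc k H (ι k (genOfExtEdge x)) := by
  show mkc k H _ = _
  unfold freeOfFP
  simp [FP.ofEdge, FP.edges, Path.edges, FP.src]

lemma V_mul_V (v w : H.V) [Decidable (v = w)] :
    mkc k H (ι k (Sum.inl v)) * mkc k H (ι k (Sum.inl w)) =
      if v = w then mkc k H (ι k (Sum.inl v)) else 0 := by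
  erw [← map_mul, rel_eq (CohnRel.vtx v w), apply_ite (mkc k H), map_zero]

lemma V_mul_edge (x : H.ext.E) :
    mkc k H (ι k (Sum.inl (H.ext.src x))) * mkc k H (ι k (genOfExtEdge x)) =
      mkc k H (ι k (genOfExtEdge x)) := by
  cases x with
  | inl e => rw [← map_mul]; exact rel_eq (CohnRel.src_edge e)
  | inr e => rw [← map_mul]; exact rel_eq (CohnRel.tgt_star e)

lemma edge_mul_V (x : H.ext.E) :
    mkc k H (ι k (genOfExtEdge x)) * mkc k H (ι k (Sum.inl (H.ext.tgt x))) =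
      mkc k H (ι k (genOfExtEdge x)) := by
  cases x with
  | inl e => rw [← map_mul]; exact rel_eq (CohnRel.edge_tgt e)
  | inr e => rw [← map_mul]; exact rel_eq (CohnRel.star_src e)

lemma star_mul_edge (e f : H.E) [Decidable (e = f)] :
    mkc k H (ι k (Sum.inr (Sum.inr e))) * mkc k H (ι k (Sum.inr (Sum.inl f))) =
      if e = f then mkc k H (ι k (Sum.inl (H.tgt e))) else 0 := by
  erw [← map_mul, rel_eq (CohnRel.cohn e f), apply_ite (mkc k H), map_zero]

lemma elem_cons (x : H.ext.E) {b : H.ext.V} (q : H.ext.Path (H.ext.tgt x) b) :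
    cohnPathElem k (⟨H.ext.src x, b, .cons x q⟩ : H.ext.FP) =
      mkc k H (ι k (genOfExtEdge x)) * cohnPathElem k (⟨H.ext.tgt x, b, q⟩ : H.ext.FP) := by
  by_cases h : q.edges = []
  · rw [show cohnPathElem k (⟨H.ext.tgt x, b, q⟩ : H.ext.FP)
        = mkc k H (freeOfFP k ⟨H.ext.tgt x, b, q⟩) from rfl]
    rw [show cohnPathElem k (⟨H.ext.src x, b, .cons x q⟩ : H.ext.FP)
        = mkc k H (freeOfFP k ⟨H.ext.src x, b, .cons x q⟩) from rfl]
    simp [freeOfFP, FP.edges, Path.edges, h, FP.src, edge_mul_V]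
  · rw [show cohnPathElem k (⟨H.ext.tgt x, b, q⟩ : H.ext.FP)
        = mkc k H (freeOfFP k ⟨H.ext.tgt x, b, q⟩) from rfl]
    rw [show cohnPathElem k (⟨H.ext.src x, b, .cons x q⟩ : H.ext.FP)
        = mkc k H (freeOfFP k ⟨H.ext.src x, b, .cons x q⟩) from rfl]
    rw [← map_mul]
    congr 1
    simp [freeOfFP, FP.edges, Path.edges, h, FP.src]

lemma src_mul_elem : ∀ {a b : H.ext.V} (p : H.ext.Path a b),
    mkc k H (ι k (Sum.inl a)) * cohnPathElem k (⟨a, b, p⟩ : H.ext.FP) =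
      cohnPathElem k (⟨a, b, p⟩ : H.ext.FP) := by
  intro a b p
  cases p with
  | nil v => rw [elem_nil]; classical erw [V_mul_V]; exact if_pos rfl
  | cons x q => rw [elem_cons, ← mul_assoc, V_mul_edge]

lemma elem_mul_tgt : ∀ {a b : H.ext.V} (p : H.ext.Path a b),
    cohnPathElem k (⟨a, b, p⟩ : H.ext.FP) * mkc k H (ι k (Sum.inl b)) =
      cohnPathElem k (⟨a, b, p⟩ : H.ext.FP) := by
  intro a b p
  induction p with
  | nil v => rw [elem_nil]; classical erw [V_mul_V]; exact if_pos rfl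
  | cons x q ih => rw [elem_cons, mul_assoc, ih]

lemma elem_mul_elem_ne {a b a' b' : H.ext.V} (p : H.ext.Path a b) (q : H.ext.Path a' b')
    (hne : b ≠ a') :
    cohnPathElem k (⟨a, b, p⟩ : H.ext.FP) * cohnPathElem k (⟨a', b', q⟩ : H.ext.FP) = 0 := by
  classical
  erw [← elem_mul_tgt p, ← src_mul_elem q, mul_assoc, ← mul_assoc (mkc k H (ι k (Sum.inl b))),
    V_mul_V, if_neg hne]
  simp

lemma elem_comp : ∀ {a b c : H.ext.V} (p : H.ext.Path a b) (q : H.ext.Path b c),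
    cohnPathElem k (⟨a, c, p.comp q⟩ : H.ext.FP) =
      cohnPathElem k (⟨a, b, p⟩ : H.ext.FP) * cohnPathElem k (⟨b, c, q⟩ : H.ext.FP) := by
  intro a b c p q
  induction p with
  | nil v => rw [elem_nil, src_mul_elem]; rfl
  | cons x p' ih =>
    show cohnPathElem k (⟨_, c, .cons x (p'.comp q)⟩ : H.ext.FP) = _
    rw [elem_cons, ih, elem_cons, mul_assoc]

lemma elem_fpcomp (p q : H.ext.FP) (h : p.tgt = q.src) :
    cohnPathElem k (p.comp q h) = cohnPathElem k p * cohnPathElem k q := by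
  obtain ⟨a, b, pp⟩ := p
  obtain ⟨b', c, qq⟩ := q
  cases h
  exact elem_comp pp qq


lemma elem_single (x : H.ext.E) :
    cohnPathElem k (⟨H.ext.src x, H.ext.tgt x, .cons x (.nil _)⟩ : H.ext.FP) =
      mkc k H (ι k (genOfExtEdge x)) := elem_ofEdge x

lemma elem_single_inr (e : H.E) :
    cohnPathElem k (⟨H.tgt e, H.src e,
        Path.cons (G := H.ext) (Sum.inr e) (Path.nil (G := H.ext) (H.src e))⟩ : H.ext.FP) =
      mkc k H (ι k (Sum.inr (Sum.inr e))) := elem_single (Sum.inr e)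

lemma elem_cons_inl (e : H.E) {b : H.ext.V} (q : H.ext.Path (H.tgt e) b) :
    cohnPathElem k (⟨H.src e, b, Path.cons (G := H.ext) (Sum.inl e) q⟩ : H.ext.FP) =
      mkc k H (ι k (Sum.inr (Sum.inl e))) * cohnPathElem k (⟨H.tgt e, b, q⟩ : H.ext.FP) :=
  elem_cons (Sum.inl e) q

lemma le_nil {a b : H.V} (q : H.Path a b) :
    FP.le (⟨a, a, .nil a⟩ : H.FP) ⟨a, b, q⟩ := ⟨⟨a, b, q⟩, rfl, rfl⟩

lemma le_cons {e : H.E} {b b' : H.V} {p : H.Path (H.tgt e) b} {q : H.Path (H.tgt e) b'}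
    (h : FP.le (⟨H.tgt e, b, p⟩ : H.FP) ⟨H.tgt e, b', q⟩) :
    FP.le (⟨H.src e, b, .cons e p⟩ : H.FP) ⟨H.src e, b', .cons e q⟩ := by
  obtain ⟨⟨rs, rt, rp⟩, hh, heq⟩ := h
  cases hh
  refine ⟨⟨b, rt, rp⟩, rfl, ?_⟩
  have hc : FP.comp (⟨H.tgt e, b, p⟩ : H.FP) ⟨b, rt, rp⟩ rfl = ⟨H.tgt e, rt, p.comp rp⟩ := rfl
  rw [hc] at heq
  have h2' : (⟨b', q⟩ : Σ w, H.Path (H.tgt e) w) = ⟨rt, p.comp rp⟩ := by injection heq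
  have hc2 : FP.comp (⟨H.src e, b, Path.cons e p⟩ : H.FP) ⟨b, rt, rp⟩ rfl =
      ⟨H.src e, rt, Path.cons e (p.comp rp)⟩ := rfl
  rw [hc2]
  injection h2' with h3 h4
  subst h3
  rw [eq_of_heq h4]

lemma star_mul_incl : ∀ {a b : H.V} (p : H.Path a b),
    cohnPathElem k (⟨b, a, p.star⟩ : H.ext.FP) *
      cohnPathElem k (⟨a, b, p.inclExt⟩ : H.ext.FP) = mkc k H (ι k (Sum.inl b)) := by
  classical
  intro a b p
  induction p with
  | nil v =>
    show mkc k H (ι k (Sum.inl v)) * mkc k H (ι k (Sum.inl v)) = _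
    classical rw [V_mul_V]; simp
  | cons e p' ih =>
    rename_i w
    show cohnPathElem k (⟨w, H.src e, Path.comp (G := H.ext) p'.star
        (Path.cons (G := H.ext) (Sum.inr e) (Path.nil (G := H.ext) (H.src e)))⟩ : H.ext.FP) *
      cohnPathElem k
        (⟨H.src e, w, Path.cons (G := H.ext) (Sum.inl e) p'.inclExt⟩ : H.ext.FP) = _
    erw [elem_comp, elem_single_inr, elem_cons_inl, mul_assoc,
      ← mul_assoc (mkc k H (ι k (Sum.inr (Sum.inr e)))), star_mul_edge, if_pos rfl,
      ← mul_assoc, elem_mul_tgt, ih]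

lemma star_mul_incl_ne : ∀ {a b : H.V} (p : H.Path a b) {a' b' : H.V} (q : H.Path a' b'),
    ¬ FP.le (⟨a, b, p⟩ : H.FP) ⟨a', b', q⟩ → ¬ FP.le (⟨a', b', q⟩ : H.FP) ⟨a, b, p⟩ →
    cohnPathElem k (⟨b, a, p.star⟩ : H.ext.FP) *
      cohnPathElem k (⟨a', b', q.inclExt⟩ : H.ext.FP) = 0 := by
  classical
  intro a b p
  induction p with
  | nil v =>
    intro a' b' q hpq _
    by_cases h : v = a'
    · cases h; exact absurd (le_nil q) hpq
    · exact elem_mul_elem_ne _ _ h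
  | cons e p' ih =>
    rename_i w
    intro a' b' q hpq hqp
    cases q with
    | nil u =>
      by_cases h : a' = H.src e
      · cases h; exact absurd (le_nil (.cons e p')) hqp
      · exact elem_mul_elem_ne _ _ (Ne.symm h)
    | cons e' q' =>
      by_cases he : e = e'
      · cases he
        show cohnPathElem k (⟨w, H.src e, Path.comp (G := H.ext) p'.star
            (Path.cons (G := H.ext) (Sum.inr e) (Path.nil (G := H.ext) (H.src e)))⟩ : H.ext.FP) *
          cohnPathElem k
            (⟨H.src e, b', Path.cons (G := H.ext) (Sum.inl e) q'.inclExt⟩ : H.ext.FP) = 0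
        erw [elem_comp, elem_single_inr, elem_cons_inl, mul_assoc,
          ← mul_assoc (mkc k H (ι k (Sum.inr (Sum.inr e)))), star_mul_edge, if_pos rfl,
          ← mul_assoc, elem_mul_tgt,
          ih q' (fun hle => hpq (le_cons hle)) (fun hle => hqp (le_cons hle))]
      · by_cases h : H.src e = H.src e'
        · show cohnPathElem k (⟨w, H.src e, Path.comp (G := H.ext) p'.star
              (Path.cons (G := H.ext) (Sum.inr e) (Path.nil (G := H.ext) (H.src e)))⟩ : H.ext.FP) *
            cohnPathElem k
              (⟨H.src e', b', Path.cons (G := H.ext) (Sum.inl e') q'.inclExt⟩ : H.ext.FP) = 0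
          erw [elem_comp, elem_single_inr, elem_cons_inl, mul_assoc,
            ← mul_assoc (mkc k H (ι k (Sum.inr (Sum.inr e)))), star_mul_edge, if_neg he]
          simp
        · exact elem_mul_elem_ne _ _ h


section Main

variable {k : Type} [Field k] {G H : DGraph}

/-- image of a generator. -/
noncomputable def Phi (k : Type) [Field k] {G H : DGraph}
    (fbar : G.ext.FP → H.ext.FP) : Gen G → CohnAlg k H
  | Sum.inl v => cohnPathElem k (fbar (FP.ofVertex (G := G.ext) v))
  | Sum.inr (Sum.inl e) => cohnPathElem k (fbar (FP.ofEdge (G := G.ext) (Sum.inl e)))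
  | Sum.inr (Sum.inr e) => cohnPathElem k (fbar (FP.ofEdge (G := G.ext) (Sum.inr e)))

/-- the induced vertex map. -/
def wvtx (f : G.FP → H.FP) (v : G.V) : H.V := (f (FP.ofVertex v)).src

lemma f_ofVertex (f : G.FP → H.FP) (hf : IsPathHom f) (v : G.V) :
    f (FP.ofVertex v) = FP.ofVertex (wvtx f v) := by
  obtain ⟨w, hw⟩ := hf.1 v
  have h2 : wvtx f v = w := by unfold wvtx; rw [hw]; rfl
  rw [hw, h2]

lemma fbar_ofVertex (f : G.FP → H.FP) (fbar : G.ext.FP → H.ext.FP)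
    (hf : IsPathHom f) (hfb : IsBar f fbar) (v : G.V) :
    fbar (FP.ofVertex (G := G.ext) v) = FP.ofVertex (G := H.ext) (wvtx (G := G) (H := H) f v) :=
  hfb.2.1 v (wvtx f v) (f_ofVertex f hf v)

lemma wvtx_inj (f : G.FP → H.FP) (hf : IsPathHom f) (hvi : VertexInjective f) :
    Function.Injective (wvtx f) := by
  intro v v' h
  apply hvi
  show f (FP.ofVertex v) = f (FP.ofVertex v')
  rw [f_ofVertex f hf, f_ofVertex f hf, h]

lemma wvtx_src (f : G.FP → H.FP) (hf : IsPathHom f) (e : G.E) :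
    wvtx f (G.src e) = (f (FP.ofEdge e)).src := by
  have h1 : f (FP.ofVertex (G.src e)) = FP.ofVertex (f (FP.ofEdge e)).src :=
    hf.2.1 (FP.ofEdge e)
  show (f (FP.ofVertex (G.src e))).src = _
  rw [h1]; rfl

lemma wvtx_tgt (f : G.FP → H.FP) (hf : IsPathHom f) (e : G.E) :
    wvtx f (G.tgt e) = (f (FP.ofEdge e)).tgt := by
  have h1 : f (FP.ofVertex (G.tgt e)) = FP.ofVertex (f (FP.ofEdge e)).tgt :=
    hf.2.2.1 (FP.ofEdge e)
  show (f (FP.ofVertex (G.tgt e))).src = _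
  rw [h1]; rfl

lemma rel_preserved (f : G.FP → H.FP) (fbar : G.ext.FP → H.ext.FP)
    (hf : IsPathHom f) (hvi : VertexInjective f) (hmono : EdgeMonotone f)
    (hfb : IsBar f fbar) :
    ∀ ⦃x y : FreeAlgebra k (Gen G)⦄, CohnRel k G x y →
      FreeAlgebra.lift k (Phi k fbar) x = FreeAlgebra.lift k (Phi k fbar) y := by
  intro x y h
  cases h with
  | vtx v w =>
    erw [map_mul, FreeAlgebra.lift_ι_apply, FreeAlgebra.lift_ι_apply, apply_ite
      (FreeAlgebra.lift k (Phi k fbar)), map_zero, FreeAlgebra.lift_ι_apply]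
    show cohnPathElem k (fbar _) * cohnPathElem k (fbar _) = if v = w then
      cohnPathElem k (fbar _) else 0
    erw [fbar_ofVertex f fbar hf hfb, fbar_ofVertex f fbar hf hfb,
      elem_ofVertex, elem_ofVertex]
    classical erw [V_mul_V]
    by_cases hvw : v = w
    · subst hvw; rw [if_pos rfl, if_pos rfl]
    · rw [if_neg (fun hc => hvw (wvtx_inj f hf hvi hc)), if_neg hvw]
  | src_edge e =>
    erw [map_mul, FreeAlgebra.lift_ι_apply, FreeAlgebra.lift_ι_apply]
    show cohnPathElem k (fbar _) * cohnPathElem k (fbar _) = cohnPathElem k (fbar _)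
    erw [fbar_ofVertex f fbar hf hfb, hfb.2.2.1 e, elem_ofVertex, wvtx_src f hf e]
    obtain ⟨ms, mt, mp⟩ : H.FP := f (FP.ofEdge e)
    exact src_mul_elem mp.inclExt
  | edge_tgt e =>
    erw [map_mul, FreeAlgebra.lift_ι_apply, FreeAlgebra.lift_ι_apply]
    show cohnPathElem k (fbar _) * cohnPathElem k (fbar _) = cohnPathElem k (fbar _)
    erw [fbar_ofVertex f fbar hf hfb, hfb.2.2.1 e, elem_ofVertex, wvtx_tgt f hf e]
    obtain ⟨ms, mt, mp⟩ : H.FP := f (FP.ofEdge e)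
    exact elem_mul_tgt mp.inclExt
  | tgt_star e =>
    erw [map_mul, FreeAlgebra.lift_ι_apply, FreeAlgebra.lift_ι_apply]
    show cohnPathElem k (fbar _) * cohnPathElem k (fbar _) = cohnPathElem k (fbar _)
    erw [fbar_ofVertex f fbar hf hfb, hfb.2.2.2 e, elem_ofVertex, wvtx_tgt f hf e]
    obtain ⟨ms, mt, mp⟩ : H.FP := f (FP.ofEdge e)
    exact src_mul_elem mp.star
  | star_src e =>
    erw [map_mul, FreeAlgebra.lift_ι_apply, FreeAlgebra.lift_ι_apply]
    show cohnPathElem k (fbar _) * cohnPathElem k (fbar _) = cohnPathElem k (fbar _)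
    erw [fbar_ofVertex f fbar hf hfb, hfb.2.2.2 e, elem_ofVertex, wvtx_src f hf e]
    obtain ⟨ms, mt, mp⟩ : H.FP := f (FP.ofEdge e)
    exact elem_mul_tgt mp.star
  | cohn e e' =>
    erw [map_mul, FreeAlgebra.lift_ι_apply, FreeAlgebra.lift_ι_apply, apply_ite
      (FreeAlgebra.lift k (Phi k fbar)), map_zero, FreeAlgebra.lift_ι_apply]
    show cohnPathElem k (fbar _) * cohnPathElem k (fbar _) = if e = e' then
      cohnPathElem k (fbar _) else 0
    rw [hfb.2.2.2 e, hfb.2.2.1 e']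
    by_cases hee : e = e'
    · subst hee
      erw [if_pos rfl, fbar_ofVertex f fbar hf hfb, elem_ofVertex, wvtx_tgt f hf e]
      obtain ⟨ms, mt, mp⟩ : H.FP := f (FP.ofEdge e)
      exact star_mul_incl mp
    · rw [if_neg hee]
      have hne1 : ¬ FP.le (f (FP.ofEdge e)) (f (FP.ofEdge e')) :=
        fun hle => hee (hmono e e' hle)
      have hne2 : ¬ FP.le (f (FP.ofEdge e')) (f (FP.ofEdge e)) :=
        fun hle => hee ((hmono e' e hle).symm)
      revert hne1 hne2
      obtain ⟨ms, mt, mp⟩ : H.FP := f (FP.ofEdge e)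
      obtain ⟨ns, nt, nq⟩ : H.FP := f (FP.ofEdge e')
      intro hne1 hne2
      exact star_mul_incl_ne mp nq hne1 hne2


/-- The induced algebra hom. -/
noncomputable def phiHom (f : G.FP → H.FP) (fbar : G.ext.FP → H.ext.FP)
    (hf : IsPathHom f) (hvi : VertexInjective f) (hmono : EdgeMonotone f)
    (hfb : IsBar f fbar) : CohnAlg k G →ₐ[k] CohnAlg k H :=
  RingQuot.liftAlgHom k ⟨FreeAlgebra.lift k (Phi k fbar),
    rel_preserved f fbar hf hvi hmono hfb⟩

lemma phiHom_mkc (f : G.FP → H.FP) (fbar : G.ext.FP → H.ext.FP)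
    (hf : IsPathHom f) (hvi : VertexInjective f) (hmono : EdgeMonotone f)
    (hfb : IsBar f fbar) (x : FreeAlgebra k (Gen G)) :
    phiHom f fbar hf hvi hmono hfb (mkc k G x) = FreeAlgebra.lift k (Phi k fbar) x :=
  RingQuot.liftAlgHom_mkAlgHom_apply _ _ _ _

lemma phiHom_elem (f : G.FP → H.FP) (fbar : G.ext.FP → H.ext.FP)
    (hf : IsPathHom f) (hvi : VertexInjective f) (hmono : EdgeMonotone f)
    (hfb : IsBar f fbar) (p : G.ext.FP) :
    phiHom f fbar hf hvi hmono hfb (cohnPathElem k p) = cohnPathElem k (fbar p) := by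
  obtain ⟨a, b, pp⟩ := p
  induction pp with
  | nil v =>
    erw [elem_nil, phiHom_mkc, FreeAlgebra.lift_ι_apply]
    rfl
  | cons x q ih =>
    rename_i w
    rw [elem_cons, map_mul, ih]
    have hstep : phiHom f fbar hf hvi hmono hfb (mkc k G (ι k (genOfExtEdge x))) =
        cohnPathElem k (fbar (FP.ofEdge (G := G.ext) x)) := by
      rw [phiHom_mkc, FreeAlgebra.lift_ι_apply]
      cases x with
      | inl e => rfl
      | inr e => rfl
    rw [hstep]
    obtain ⟨h', hcomp⟩ := hfb.1.2.2.2 (FP.ofEdge (G := G.ext) x) ⟨G.ext.tgt x, w, q⟩ rfl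
    have hkey : FP.comp (FP.ofEdge (G := G.ext) x) ⟨G.ext.tgt x, w, q⟩ rfl =
        (⟨G.ext.src x, w, .cons x q⟩ : G.ext.FP) := rfl
    rw [hkey] at hcomp
    rw [hcomp, elem_fpcomp]

lemma phiHom_unique (f : G.FP → H.FP) (fbar : G.ext.FP → H.ext.FP)
    (hf : IsPathHom f) (hvi : VertexInjective f) (hmono : EdgeMonotone f)
    (hfb : IsBar f fbar) (φ' : CohnAlg k G →ₐ[k] CohnAlg k H)
    (hφ' : ∀ p : G.ext.FP, φ' (cohnPathElem k p) = cohnPathElem k (fbar p)) :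
    φ' = phiHom f fbar hf hvi hmono hfb := by
  have hcomp : φ'.comp (mkc k G) = (phiHom f fbar hf hvi hmono hfb).comp (mkc k G) := by
    apply FreeAlgebra.hom_ext
    funext g
    show φ' (mkc k G (ι k g)) = phiHom f fbar hf hvi hmono hfb (mkc k G (ι k g))
    match g with
    | Sum.inl v =>
      rw [← elem_ofVertex (H := G) v, hφ', phiHom_elem]
    | Sum.inr (Sum.inl e) =>
      rw [show (mkc k G (ι k (Sum.inr (Sum.inl e)))) =
        cohnPathElem k (FP.ofEdge (G := G.ext) (Sum.inl e)) from (elem_ofEdge (H := G) (Sum.inl e)).symm,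
        hφ', phiHom_elem]
    | Sum.inr (Sum.inr e) =>
      rw [show (mkc k G (ι k (Sum.inr (Sum.inr e)))) =
        cohnPathElem k (FP.ofEdge (G := G.ext) (Sum.inr e)) from (elem_ofEdge (H := G) (Sum.inr e)).symm,
        hφ', phiHom_elem]
  apply AlgHom.ext
  intro x
  obtain ⟨y, rfl⟩ := RingQuot.mkAlgHom_surjective k (CohnRel k G) x
  exact AlgHom.congr_fun hcomp y

end Main

end DGraph
open DGraph in
/-- The Cohn path algebra construction is covariantly functorial on graphs and
vertex-injective path homomorphisms satisfying the monotonicity condition: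
`f_*^C : C_k(E) → C_k(F)`, determined by `[χ_p] ↦ [χ_{f̄(p)}]` for
`p ∈ FP(Ē)`, is a well-defined (unique) algebra homomorphism; the assignment is
functorial; and it is unital (sends the sum of vertex idempotents to the sum of
vertex idempotents) when the graphs have finitely many vertices and `f` is
bijective on vertices. -/
theorem cohn_algebra_functor (k : Type) [Field k] :
    (∀ (G H : DGraph) (f : G.FP → H.FP) (fbar : G.ext.FP → H.ext.FP),
      IsPathHom f → VertexInjective f → EdgeMonotone f → IsBar f fbar →
      ∃! φ : CohnAlg k G →ₐ[k] CohnAlg k H,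
        ∀ p : G.ext.FP, φ (cohnPathElem k p) = cohnPathElem k (fbar p)) ∧
    (∀ (G H K : DGraph) (f : G.FP → H.FP) (g : H.FP → K.FP)
      (fbar : G.ext.FP → H.ext.FP) (gbar : H.ext.FP → K.ext.FP)
      (φf : CohnAlg k G →ₐ[k] CohnAlg k H) (φg : CohnAlg k H →ₐ[k] CohnAlg k K),
      IsPathHom f → VertexInjective f → EdgeMonotone f → IsBar f fbar →
      IsPathHom g → VertexInjective g → EdgeMonotone g → IsBar g gbar →
      (∀ p : G.ext.FP, φf (cohnPathElem k p) = cohnPathElem k (fbar p)) →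
      (∀ p : H.ext.FP, φg (cohnPathElem k p) = cohnPathElem k (gbar p)) →
      ∀ p : G.ext.FP, (φg.comp φf) (cohnPathElem k p) = cohnPathElem k (gbar (fbar p))) ∧
    (∀ (G H : DGraph), ∀ [Fintype G.V] [Fintype H.V],
      ∀ (f : G.FP → H.FP) (fbar : G.ext.FP → H.ext.FP),
      IsPathHom f → VertexInjective f → EdgeMonotone f → IsBar f fbar →
      (∀ w : H.V, ∃ v : G.V, f (FP.ofVertex v) = FP.ofVertex w) →
      ∀ φ : CohnAlg k G →ₐ[k] CohnAlg k H,
        (∀ p : G.ext.FP, φ (cohnPathElem k p) = cohnPathElem k (fbar p)) →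
        φ (∑ v : G.V, cohnPathElem k (FP.ofVertex (G := G.ext) v)) =
          ∑ w : H.V, cohnPathElem k (FP.ofVertex (G := H.ext) w)) := by
  classical
  refine ⟨?_, ?_, ?_⟩
  · intro G H f fbar hf hvi hmono hfb
    exact ⟨phiHom f fbar hf hvi hmono hfb, phiHom_elem f fbar hf hvi hmono hfb,
      fun φ' hφ' => phiHom_unique f fbar hf hvi hmono hfb φ' hφ'⟩
  · intro G H K f g fbar gbar φf φg hf hvi hm hb hg hgvi hgm hgb hφf hφg p
    rw [AlgHom.comp_apply, hφf, hφg]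
  · intro G H _ _ f fbar hf hvi hmono hfb hsurj φ hφ
    rw [map_sum]
    have hwv : ∀ v : G.V, fbar (FP.ofVertex (G := G.ext) v) =
        FP.ofVertex (G := H.ext) (wvtx (G := G) (H := H) f v) :=
      fbar_ofVertex f fbar hf hfb
    have hbij : Function.Bijective (wvtx (G := G) (H := H) f) := by
      refine ⟨wvtx_inj f hf hvi, fun w0 => ?_⟩
      obtain ⟨v, hv⟩ := hsurj w0
      refine ⟨v, ?_⟩
      unfold wvtx
      rw [hv]
      rfl
    calc ∑ v : G.V, φ (cohnPathElem k (FP.ofVertex (G := G.ext) v))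
        = ∑ v : G.V, cohnPathElem k
            (FP.ofVertex (G := H.ext) (wvtx (G := G) (H := H) f v)) := by
          refine Finset.sum_congr rfl fun v _ => ?_
          rw [hφ, hwv]
      _ = ∑ w : H.V, cohnPathElem k (FP.ofVertex (G := H.ext) w) :=
          Fintype.sum_bijective _ hbij _ _ fun v => rfl
end

section
/- Let E be the graph with one vertex v and two loops e₁, e₂, and F the graph with one vertex and one loop e. The path homomorphism f with f(e₂) = e and f(e₁) = e² is injective on edges and on vertices, but the prescription [χ_p] ↦ [χ_{f̄(p)}] does not define an algebra homomorphism C_k(E) → C_k(F) of Cohn path algebras: it would send the zero element [χ_{e₂*}][χ_{e₁}] = 0 to [χ_{e*}][χ_{e²}] = [χ_e] ≠ 0. -/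
/-- A directed graph. -/
structure CGraph where
  V : Type
  E : Type
  src : E → V
  tgt : E → V

namespace CGraph

/-- Finite paths from `v` to `w` in a graph. -/
inductive Path (G : CGraph) : G.V → G.V → Type
  | nil (v : G.V) : Path G v v
  | cons (e : G.E) {w : G.V} (p : Path G (G.tgt e) w) : Path G (G.src e) w

/-- Concatenation of composable indexed paths. -/
def Path.comp {G : CGraph} : ∀ {a b c : G.V}, G.Path a b → G.Path b c → G.Path a c
  | _, _, _, .nil _, q => q
  | _, _, _, .cons e p, q => .cons e (p.comp q)

/-- The list of edges of a path. -/
def Path.edges {G : CGraph} : ∀ {a b : G.V}, G.Path a b → List G.E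
  | _, _, .nil _ => []
  | _, _, .cons e p => e :: p.edges

/-- The set of all finite paths of a graph (with arbitrary endpoints). -/
def FP (G : CGraph) : Type := Σ (v : G.V) (w : G.V), G.Path v w

/-- The source (beginning) of a finite path. -/
def FP.src {G : CGraph} (p : G.FP) : G.V := p.1

/-- The target (end) of a finite path. -/
def FP.tgt {G : CGraph} (p : G.FP) : G.V := p.2.1

/-- The list of edges of a finite path. -/
def FP.edges {G : CGraph} (p : G.FP) : List G.E := p.2.2.edges

/-- The length of a finite path. -/
def FP.length {G : CGraph} (p : G.FP) : ℕ := p.edges.length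

/-- A vertex, viewed as a length-zero finite path. -/
def FP.ofVertex {G : CGraph} (v : G.V) : G.FP := ⟨v, v, .nil v⟩

/-- An edge, viewed as a length-one finite path. -/
def FP.ofEdge {G : CGraph} (e : G.E) : G.FP :=
  ⟨G.src e, G.tgt e, .cons e (.nil (G.tgt e))⟩

/-- Concatenation of composable finite paths. -/
def FP.comp {G : CGraph} (p q : G.FP) (h : p.tgt = q.src) : G.FP :=
  ⟨p.1, q.2.1, p.2.2.comp (cast (congrArg (fun x => G.Path x q.2.1) h.symm) q.2.2)⟩

/-- The prefix (extension) relation `α ⪯ β` on finite paths: `β = αγ` for some path `γ`. -/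
def FP.le {G : CGraph} (p q : G.FP) : Prop :=
  ∃ (r : G.FP) (h : p.tgt = r.src), q = p.comp r h

/-- A path homomorphism of graphs: a map on finite paths sending vertices to
vertices, intertwining the extended source and target maps, and preserving
concatenation of composable paths. -/
def IsPathHom {G H : CGraph} (f : G.FP → H.FP) : Prop :=
  (∀ v : G.V, ∃ w : H.V, f (FP.ofVertex v) = FP.ofVertex w) ∧
  (∀ p : G.FP, f (FP.ofVertex p.src) = FP.ofVertex (f p).src) ∧
  (∀ p : G.FP, f (FP.ofVertex p.tgt) = FP.ofVertex (f p).tgt) ∧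
  (∀ (p q : G.FP) (h : p.tgt = q.src),
    ∃ h' : (f p).tgt = (f q).src, f (p.comp q h) = (f p).comp (f q) h')

/-- A map on finite paths is vertex-injective if it is injective on vertices. -/
def VertexInjective {G H : CGraph} (f : G.FP → H.FP) : Prop :=
  Function.Injective (fun v : G.V => f (FP.ofVertex v))

/-- The monotonicity condition on edges: `f(e) ⪯ f(e′)` implies `e = e′`. -/
def EdgeMonotone {G H : CGraph} (f : G.FP → H.FP) : Prop :=
  ∀ e e' : G.E, FP.le (f (FP.ofEdge e)) (f (FP.ofEdge e')) → e = e'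

end CGraph

namespace CGraph

/-- The extended (double) graph `Ē` of `E`: same vertices, edges `E¹ ⊔ (E¹)*`,
with `s(e*) = t(e)` and `t(e*) = s(e)`. -/
def ext (G : CGraph) : CGraph where
  V := G.V
  E := G.E ⊕ G.E
  src := Sum.elim G.src G.tgt
  tgt := Sum.elim G.tgt G.src

/-- The canonical inclusion of paths of `E` into paths of the extended graph `Ē`. -/
def Path.inclExt {G : CGraph} : ∀ {v w : G.V}, G.Path v w → G.ext.Path v w
  | _, _, .nil v => Path.nil (G := G.ext) v
  | _, _, .cons e p => Path.cons (G := G.ext) (Sum.inl e) p.inclExt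

/-- The star (reversal) of a path of `E`, as a path of the extended graph `Ē`:
`(e₁…eₙ)* = eₙ*…e₁*`. -/
def Path.star {G : CGraph} : ∀ {v w : G.V}, G.Path v w → G.ext.Path w v
  | _, _, .nil v => Path.nil (G := G.ext) v
  | _, _, .cons e p =>
      Path.comp p.star (Path.cons (G := G.ext) (Sum.inr e) (Path.nil (G := G.ext) (G.src e)))

/-- The canonical inclusion `FP(E) → FP(Ē)`. -/
def FP.inclExt {G : CGraph} (p : G.FP) : G.ext.FP := ⟨p.1, p.2.1, p.2.2.inclExt⟩

/-- The star `p ↦ p*` of finite paths, `FP(E) → FP(Ē)`. -/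
def FP.star {G : CGraph} (p : G.FP) : G.ext.FP := ⟨p.2.1, p.1, p.2.2.star⟩

/-- `fbar` is the path homomorphism `Ē → F̄` of extended graphs induced by a
path homomorphism `f : E → F`: it is a path homomorphism agreeing with `f` on
vertices and satisfying `f̄(e) = f(e)` and `f̄(e*) = f(e)*` on the two kinds of
edges of `Ē`. -/
def IsBar {G H : CGraph} (f : G.FP → H.FP) (fbar : G.ext.FP → H.ext.FP) : Prop :=
  IsPathHom fbar ∧
  (∀ (v : G.V) (w : H.V), f (FP.ofVertex v) = FP.ofVertex w →
    fbar (FP.ofVertex (G := G.ext) v) = FP.ofVertex (G := H.ext) w) ∧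
  (∀ e : G.E, fbar (FP.ofEdge (G := G.ext) (Sum.inl e)) = FP.inclExt (f (FP.ofEdge e))) ∧
  (∀ e : G.E, fbar (FP.ofEdge (G := G.ext) (Sum.inr e)) = FP.star (f (FP.ofEdge e)))

end CGraph

namespace CGraph

/-- Generators of the Cohn/Leavitt path algebra of `G`: a generator `χ_v` for
each vertex, `χ_e` and `χ_{e*}` for each edge. -/
def Gen (G : CGraph) : Type := G.V ⊕ G.E ⊕ G.E

/-- The generator of the Cohn/Leavitt path algebra corresponding to an edge of
the extended graph `Ḡ`. -/
def genOfExtEdge {G : CGraph} (x : G.ext.E) : Gen G :=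
  Sum.elim (fun e => Sum.inr (Sum.inl e)) (fun e => Sum.inr (Sum.inr e)) x

/-- The relations defining the Cohn path algebra as a quotient of the free
algebra on the generators `χ_v, χ_e, χ_{e*}`: the path-algebra relations
`χ_v χ_w = δ_{v,w} χ_v`, `χ_{s(e)} χ_e = χ_e = χ_e χ_{t(e)}`,
`χ_{t(e)} χ_{e*} = χ_{e*} = χ_{e*} χ_{s(e)}`, together with the first
Cuntz–Krieger relation `χ_{e*} χ_f = δ_{e,f} χ_{t(e)}`. -/
inductive CohnRel (k : Type) [Field k] (G : CGraph) :
    FreeAlgebra k (Gen G) → FreeAlgebra k (Gen G) → Prop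
  | vtx (v w : G.V) [Decidable (v = w)] :
      CohnRel k G (FreeAlgebra.ι k (Sum.inl v) * FreeAlgebra.ι k (Sum.inl w))
        (if v = w then FreeAlgebra.ι k (Sum.inl v) else 0)
  | src_edge (e : G.E) :
      CohnRel k G (FreeAlgebra.ι k (Sum.inl (G.src e)) * FreeAlgebra.ι k (Sum.inr (Sum.inl e)))
        (FreeAlgebra.ι k (Sum.inr (Sum.inl e)))
  | edge_tgt (e : G.E) :
      CohnRel k G (FreeAlgebra.ι k (Sum.inr (Sum.inl e)) * FreeAlgebra.ι k (Sum.inl (G.tgt e)))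
        (FreeAlgebra.ι k (Sum.inr (Sum.inl e)))
  | tgt_star (e : G.E) :
      CohnRel k G (FreeAlgebra.ι k (Sum.inl (G.tgt e)) * FreeAlgebra.ι k (Sum.inr (Sum.inr e)))
        (FreeAlgebra.ι k (Sum.inr (Sum.inr e)))
  | star_src (e : G.E) :
      CohnRel k G (FreeAlgebra.ι k (Sum.inr (Sum.inr e)) * FreeAlgebra.ι k (Sum.inl (G.src e)))
        (FreeAlgebra.ι k (Sum.inr (Sum.inr e)))
  | cohn (e f : G.E) [Decidable (e = f)] :
      CohnRel k G (FreeAlgebra.ι k (Sum.inr (Sum.inr e)) * FreeAlgebra.ι k (Sum.inr (Sum.inl f)))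
        (if e = f then FreeAlgebra.ι k (Sum.inl (G.tgt e)) else 0)

/-- The Cohn path algebra `C_k(G)`. -/
def CohnAlg (k : Type) [Field k] (G : CGraph) : Type := RingQuot (CohnRel k G)

noncomputable instance (k : Type) [Field k] (G : CGraph) : Ring (CohnAlg k G) :=
  inferInstanceAs (Ring (RingQuot (CohnRel k G)))

noncomputable instance (k : Type) [Field k] (G : CGraph) : Algebra k (CohnAlg k G) :=
  inferInstanceAs (Algebra k (RingQuot (CohnRel k G)))

/-- The element of the free algebra on the generators given by a finite path of
the extended graph: `χ_v` for the length-zero path at `v`, and the product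
`χ_{x₁} ⋯ χ_{xₙ}` for a path `x₁…xₙ` of positive length. -/
noncomputable def freeOfFP (k : Type) [Field k] {G : CGraph} (p : G.ext.FP) :
    FreeAlgebra k (Gen G) :=
  if p.edges.isEmpty then FreeAlgebra.ι k (Sum.inl (p.src : G.V))
  else (p.edges.map fun x => FreeAlgebra.ι k (genOfExtEdge x)).prod

/-- The class `[χ_p]` in the Cohn path algebra of a finite path `p` of the
extended graph. -/
noncomputable def cohnPathElem (k : Type) [Field k] {G : CGraph} (p : G.ext.FP) :
    CohnAlg k G :=
  RingQuot.mkAlgHom k (CohnRel k G) (freeOfFP k p)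

end CGraph

namespace CGraph

/-- The graph with one vertex `v` and two loops `e₁ = false`, `e₂ = true`. -/
def E14 : CGraph where
  V := Unit
  E := Bool
  src := fun _ => ()
  tgt := fun _ => ()

/-- The graph with one vertex `v` and one loop `e`. -/
def F14 : CGraph where
  V := Unit
  E := Unit
  src := fun _ => ()
  tgt := fun _ => ()

end CGraph

namespace CGraph

/-- The map on paths underlying `f`: `true ↦ e`, `false ↦ e²`. -/
def toF14 : ∀ {v w : E14.V}, E14.Path v w → F14.Path () ()
  | _, _, .nil _ => Path.nil (G := F14) ()
  | _, _, .cons true p => Path.cons (G := F14) () (toF14 p)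
  | _, _, .cons false p => Path.cons (G := F14) () (Path.cons (G := F14) () (toF14 p))

theorem toF14_comp : ∀ {a b c : E14.V} (p : E14.Path a b) (q : E14.Path b c),
    toF14 (p.comp q) = (toF14 p).comp (toF14 q)
  | _, _, _, .nil _, _ => rfl
  | _, _, _, .cons true p, q => by
      show Path.cons (G := F14) () (toF14 (p.comp q)) = _
      rw [toF14_comp p q]; rfl
  | _, _, _, .cons false p, q => by
      show Path.cons (G := F14) () (Path.cons (G := F14) () (toF14 (p.comp q))) = _
      rw [toF14_comp p q]; rfl

theorem FP.comp_eq {G : CGraph} {p p' q q' : G.FP} (hp : p = p') (hq : q = q')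
    (h : p.tgt = q.src) (h' : p'.tgt = q'.src) :
    p.comp q h = p'.comp q' h' := by subst hp; subst hq; rfl

/-- The shift-right operator. -/
noncomputable def Sop (k : Type) [Field k] : Module.End k (ℕ →₀ k) :=
  Finsupp.lmapDomain k k (· + 1)

/-- The shift-left operator. -/
noncomputable def Top (k : Type) [Field k] : Module.End k (ℕ →₀ k) :=
  Finsupp.lmapDomain k k (· - 1)

theorem Top_mul_Sop (k : Type) [Field k] : Top k * Sop k = 1 := by
  apply LinearMap.ext; intro x
  show Finsupp.mapDomain (· - 1) (Finsupp.mapDomain (· + 1) x) = x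
  rw [← Finsupp.mapDomain_comp]
  have : ((· - 1) ∘ (· + 1) : ℕ → ℕ) = id := by funext n; simp
  rw [this, Finsupp.mapDomain_id]

theorem Sop_ne_zero (k : Type) [Field k] : Sop k ≠ 0 := by
  intro h
  have h1 : Sop k (Finsupp.single 0 (1 : k)) = Finsupp.single 1 1 := by
    show Finsupp.mapDomain (· + 1) (Finsupp.single 0 (1 : k)) = _
    rw [Finsupp.mapDomain_single]
  rw [h] at h1
  simp only [LinearMap.zero_apply] at h1
  exact one_ne_zero (Finsupp.single_eq_zero.mp h1.symm)

end CGraph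

open CGraph in
/-- For `E` the two-loop graph and `F` the one-loop graph, the path
homomorphism `f` with `f(e₂) = e` and `f(e₁) = e²` is injective on vertices and
on edges, yet the prescription `[χ_p] ↦ [χ_{f̄(p)}]` does not define an algebra
homomorphism of Cohn path algebras `C_k(E) → C_k(F)`: no algebra homomorphism
satisfies it. Hence injectivity on edges does not imply the monotonicity
condition. -/
theorem edge_injective_cohn_not_welldefined (k : Type) [Field k] :
    (∃ f : E14.FP → F14.FP,
      IsPathHom f ∧ VertexInjective f ∧
      Function.Injective (fun e : E14.E => f (FP.ofEdge e)) ∧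
      f (FP.ofEdge true) = FP.ofEdge () ∧
      f (FP.ofEdge false) = FP.comp (FP.ofEdge (G := F14) ()) (FP.ofEdge (G := F14) ()) rfl) ∧
    (∀ (f : E14.FP → F14.FP) (fbar : E14.ext.FP → F14.ext.FP),
      IsPathHom f →
      f (FP.ofEdge true) = FP.ofEdge () →
      f (FP.ofEdge false) = FP.comp (FP.ofEdge (G := F14) ()) (FP.ofEdge (G := F14) ()) rfl →
      IsBar f fbar →
      ¬∃ φ : CohnAlg k E14 →ₐ[k] CohnAlg k F14,
        ∀ p : E14.ext.FP, φ (cohnPathElem k p) = cohnPathElem k (fbar p)) := by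
  classical
  constructor
  · refine ⟨fun p => ⟨(), (), toF14 p.2.2⟩, ⟨?_, ?_, ?_, ?_⟩, ?_, ?_, rfl, rfl⟩
    · exact fun v => ⟨(), rfl⟩
    · exact fun p => rfl
    · exact fun p => rfl
    · intro p q h
      refine ⟨rfl, ?_⟩
      obtain ⟨a, b, p⟩ := p
      obtain ⟨c, d, q⟩ := q
      cases b; cases c
      show Sigma.mk _ _ = _
      simp only [FP.comp]
      congr 1
      exact congrArg (Sigma.mk ()) (toF14_comp p q)
    · exact fun a b _ => Subsingleton.elim (α := Unit) a b
    · intro e e' h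
      cases e <;> cases e' <;>
        first
          | rfl
          | exact absurd (congrArg FP.length h) (by decide)
  · intro f fbar hf hft hff hbar
    rintro ⟨φ, hφ⟩
    obtain ⟨hhom, hvtx, hinl, hinr⟩ := hbar
    obtain ⟨h', hc⟩ := hhom.2.2.2 (FP.ofEdge (G := E14.ext) (Sum.inr true))
      (FP.ofEdge (G := E14.ext) (Sum.inl false)) rfl
    set pE : E14.ext.FP := (FP.ofEdge (G := E14.ext) (Sum.inr true)).comp
      (FP.ofEdge (G := E14.ext) (Sum.inl false)) rfl with hpE
    -- the image path `e* e e`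
    set Q : F14.ext.FP := ⟨(), (), .cons (G := F14.ext) (Sum.inr ())
      (.cons (G := F14.ext) (Sum.inl ()) (.cons (G := F14.ext) (Sum.inl ())
        (.nil (G := F14.ext) ())))⟩ with hQ
    have hA : fbar (FP.ofEdge (G := E14.ext) (Sum.inr true))
        = FP.star (FP.ofEdge (G := F14) ()) := by rw [hinr true, hft]
    have hB : fbar (FP.ofEdge (G := E14.ext) (Sum.inl false))
        = FP.inclExt ((FP.ofEdge (G := F14) ()).comp (FP.ofEdge (G := F14) ()) rfl) := by
      rw [hinl false, hff]
    have hq : fbar pE = Q := by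
      rw [hpE, hc]
      exact (FP.comp_eq hA hB h' rfl).trans rfl
    have h0 : cohnPathElem k pE = 0 := by
      show RingQuot.mkAlgHom k (CohnRel k E14) (freeOfFP k pE) = 0
      have e0 : freeOfFP k pE = FreeAlgebra.ι k (X := Gen E14) (Sum.inr (Sum.inr true)) *
          (FreeAlgebra.ι k (X := Gen E14) (Sum.inr (Sum.inl false)) * 1) := rfl
      rw [e0, mul_one]
      exact (RingQuot.mkAlgHom_rel k (CohnRel.cohn (k := k) (G := E14) true false)).trans (by simp)
    have hTS : RingQuot.mkAlgHom k (CohnRel k F14) (FreeAlgebra.ι k (Sum.inr (Sum.inr ()))) *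
        RingQuot.mkAlgHom k (CohnRel k F14) (FreeAlgebra.ι k (Sum.inr (Sum.inl ()))) = RingQuot.mkAlgHom k (CohnRel k F14) (FreeAlgebra.ι k (Sum.inl ())) := by
      rw [← map_mul]
      exact (RingQuot.mkAlgHom_rel k (CohnRel.cohn (k := k) (G := F14) () ())).trans (by exact congrArg _ (if_pos rfl))
    have hVS : RingQuot.mkAlgHom k (CohnRel k F14) (FreeAlgebra.ι k (Sum.inl ())) *
        RingQuot.mkAlgHom k (CohnRel k F14) (FreeAlgebra.ι k (Sum.inr (Sum.inl ()))) = RingQuot.mkAlgHom k (CohnRel k F14) (FreeAlgebra.ι k (Sum.inr (Sum.inl ()))) := by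
      rw [← map_mul]
      exact RingQuot.mkAlgHom_rel k (CohnRel.src_edge (G := F14) ())
    have h1 : cohnPathElem k Q = RingQuot.mkAlgHom k (CohnRel k F14) (FreeAlgebra.ι k (Sum.inr (Sum.inl ()))) := by
      show RingQuot.mkAlgHom k (CohnRel k F14) (freeOfFP k Q) = _
      have e1 : freeOfFP k Q = FreeAlgebra.ι k (X := Gen F14) (Sum.inr (Sum.inr ())) *
          (FreeAlgebra.ι k (X := Gen F14) (Sum.inr (Sum.inl ())) *
            (FreeAlgebra.ι k (X := Gen F14) (Sum.inr (Sum.inl ())) * 1)) := rfl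
      rw [e1, mul_one, map_mul, map_mul, ← mul_assoc, hTS, hVS]
    -- representation of the Cohn algebra of F14 on k^(ℕ)
    set g : Gen F14 → Module.End k (ℕ →₀ k) :=
      fun x => Sum.elim (fun _ => 1) (Sum.elim (fun _ => Sop k) (fun _ => Top k)) x with hg
    have hrel : ∀ ⦃x y⦄, CohnRel k F14 x y →
        (FreeAlgebra.lift k g) x = (FreeAlgebra.lift k g) y := by
      intro x y r
      cases r with
      | vtx v w => cases v; cases w; erw [map_mul, FreeAlgebra.lift_ι_apply, if_pos rfl, FreeAlgebra.lift_ι_apply]; exact mul_one _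
      | src_edge e => erw [map_mul, FreeAlgebra.lift_ι_apply, FreeAlgebra.lift_ι_apply]; simp [hg]
      | edge_tgt e => erw [map_mul, FreeAlgebra.lift_ι_apply, FreeAlgebra.lift_ι_apply]; simp [hg]
      | tgt_star e => erw [map_mul, FreeAlgebra.lift_ι_apply, FreeAlgebra.lift_ι_apply]; simp [hg]
      | star_src e => erw [map_mul, FreeAlgebra.lift_ι_apply, FreeAlgebra.lift_ι_apply]; simp [hg]
      | cohn e f => cases e; cases f; erw [map_mul, FreeAlgebra.lift_ι_apply, FreeAlgebra.lift_ι_apply, if_pos rfl, FreeAlgebra.lift_ι_apply]; exact Top_mul_Sop k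
    set ψ : CohnAlg k F14 →ₐ[k] Module.End k (ℕ →₀ k) :=
      RingQuot.liftAlgHom k ⟨FreeAlgebra.lift k g, hrel⟩ with hψ
    have hψS : ψ (RingQuot.mkAlgHom k (CohnRel k F14) (FreeAlgebra.ι k (Sum.inr (Sum.inl ())))) = Sop k := by
      rw [hψ]
      exact (RingQuot.liftAlgHom_mkAlgHom_apply _ _ _ _).trans (FreeAlgebra.lift_ι_apply _ _)
    have key := hφ pE
    rw [h0, hq, h1, map_zero] at key
    exact Sop_ne_zero k (by rw [← hψS, ← key, map_zero])
end

section
/- Let f : FP(E) → FP(F) be a vertex-injective, monotone, regular path homomorphism, and let v be a regular vertex of E that is not 0-regular. Then f(v) is a regular vertex of F that is not 0-regular. -/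
namespace DGraph

/-- A vertex is regular if it emits at least one and only finitely many edges. -/
def RegularV (G : DGraph) (v : G.V) : Prop :=
  {e : G.E | G.src e = v}.Finite ∧ {e : G.E | G.src e = v}.Nonempty

/-- A vertex is 0-regular if it emits exactly one edge and that edge is a loop
at the vertex. -/
def Reg0V (G : DGraph) (v : G.V) : Prop :=
  ∃ e : G.E, {x : G.E | G.src x = v} = {e} ∧ G.tgt e = v

/-- The image `f(s⁻¹(v))` of the set of edges emitted from `v`. -/
def EdgeImg {G H : DGraph} (f : G.FP → H.FP) (v : G.V) : Set H.FP :=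
  (fun e => f (FP.ofEdge e)) '' {e : G.E | G.src e = v}

/-- The regularity condition at a vertex `v`: `f` is injective on `s⁻¹(v)`, and
`p ∈ f(s⁻¹(v))` if and only if (i) `p` is a path of positive length, (ii) any
extension `pq ∈ f(s⁻¹(v))` has `q` trivial, and (iii) for every `i` and every
edge `x` with the same source as the `i`-th edge of `p`, some element of
`f(s⁻¹(v))` extends `e₁…e_{i−1}x`. -/
def RegCond {G H : DGraph} (f : G.FP → H.FP) (v : G.V) : Prop :=
  Set.InjOn (fun e => f (FP.ofEdge e)) {e : G.E | G.src e = v} ∧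
  ∀ p : H.FP, p ∈ EdgeImg f v ↔
    (0 < p.length ∧
     (∀ (q : H.FP) (h : p.tgt = q.src),
        FP.comp p q h ∈ EdgeImg f v → q = FP.ofVertex p.tgt) ∧
     (∀ (i : ℕ) (hi : i < p.length) (x : H.E),
        H.src x = H.src (p.edges.get ⟨i, hi⟩) →
        ∃ q ∈ EdgeImg f v, (p.edges.take i ++ [x]) <+: q.edges))

/-- A path homomorphism is regular if the regularity condition holds at every
regular vertex which is not 0-regular, and at every 0-regular vertex either the
regularity condition holds or `f(s⁻¹(v)) = {f(v)}`. -/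
def RegularHom {G H : DGraph} (f : G.FP → H.FP) : Prop :=
  ∀ v : G.V, RegularV G v →
    ((¬ Reg0V G v → RegCond f v) ∧
     (Reg0V G v → (RegCond f v ∨ EdgeImg f v = {f (FP.ofVertex v)})))

end DGraph

namespace DGraph

lemma Path.edges_comp' {G : DGraph} {a b c : G.V} (P : G.Path a b) (Q : G.Path b c) :
    (P.comp Q).edges = P.edges ++ Q.edges := by
  induction P with
  | nil => rfl
  | cons e p ih => simp [Path.comp, Path.edges, ih]

lemma Path.edges_cast' {G : DGraph} {a a' b : G.V} (h : a = a') (P : G.Path a b) :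
    (cast (congrArg (fun x => G.Path x b) h) P).edges = P.edges := by
  subst h; rfl

lemma FP.edges_comp' {G : DGraph} (p q : G.FP) (h : p.tgt = q.src) :
    (p.comp q h).edges = p.edges ++ q.edges := by
  show (p.2.2.comp _).edges = _
  exact (Path.edges_comp' p.2.2 _).trans (congrArg (p.2.2.edges ++ ·) (Path.edges_cast' h.symm q.2.2))

lemma Path.src_head' {G : DGraph} : ∀ {a b : G.V} (P : G.Path a b)
    (h : 0 < P.edges.length), G.src (P.edges.get ⟨0, h⟩) = a
  | _, _, .nil _, h => by simp [Path.edges] at h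
  | _, _, .cons e p, _ => rfl

lemma Path.eq_of_edges' {G : DGraph} : ∀ {a b : G.V} (P : G.Path a b)
    {a' b' : G.V} (P' : G.Path a' b'), a = a' → P.edges = P'.edges → b = b' ∧ HEq P P' := by
  intro a b P
  induction P with
  | nil v =>
    intro a' b' P' ha h
    cases P' with
    | nil => subst ha; exact ⟨rfl, HEq.rfl⟩
    | cons e p => simp [Path.edges] at h
  | cons e p ih =>
    intro a' b' P' ha h
    cases P' with
    | nil => simp [Path.edges] at h
    | cons e' p' =>
      simp only [Path.edges, List.cons.injEq] at h
      obtain ⟨he, hedges⟩ := h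
      subst he
      obtain ⟨hb, hp⟩ := ih p' rfl hedges
      subst hb
      cases hp
      exact ⟨rfl, HEq.rfl⟩

lemma FP.ext_edges' {G : DGraph} {p q : G.FP} (h1 : p.src = q.src)
    (h2 : p.edges = q.edges) : p = q := by
  obtain ⟨a, b, P⟩ := p
  obtain ⟨a', b', Q⟩ := q
  have ha : a = a' := h1
  obtain ⟨hb, hP⟩ := Path.eq_of_edges' P Q ha h2
  subst ha; subst hb; cases hP; rfl

/-- The `n`-fold iterate of a loop, as a path. -/
def xpath (H : DGraph) (x : H.E) (w : H.V) (hs : H.src x = w) (ht : H.tgt x = w) :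
    ℕ → H.Path w w
  | 0 => .nil w
  | n + 1 => cast (congrArg (fun a => H.Path a w) hs)
      (Path.cons x (cast (congrArg (fun a => H.Path a w) ht.symm) (xpath H x w hs ht n)))

lemma xpath_edges {H : DGraph} (x : H.E) (w : H.V) (hs : H.src x = w)
    (ht : H.tgt x = w) : ∀ n, (xpath H x w hs ht n).edges = List.replicate n x
  | 0 => rfl
  | n + 1 => by
    show (cast (congrArg (fun a => H.Path a w) hs)
      (Path.cons x (cast (congrArg (fun a => H.Path a w) ht.symm)
        (xpath H x w hs ht n)))).edges = _
    rw [Path.edges_cast' hs]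
    show x :: (cast (congrArg (fun a => H.Path a w) ht.symm)
      (xpath H x w hs ht n)).edges = _
    rw [Path.edges_cast' ht.symm, xpath_edges x w hs ht n, List.replicate_succ]

lemma loop_path {H : DGraph} {w : H.V} {x : H.E}
    (hx1 : {y : H.E | H.src y = w} = {x}) (hx2 : H.tgt x = w) :
    ∀ {a b : H.V} (P : H.Path a b), a = w →
      b = w ∧ P.edges = List.replicate P.edges.length x := by
  intro a b P
  induction P with
  | nil v => intro h; exact ⟨h, rfl⟩
  | cons e p ih =>
    intro h
    have he : e = x := by
      have : e ∈ {y : H.E | H.src y = w} := h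
      rw [hx1] at this; exact this
    have ht : H.tgt e = w := he ▸ hx2
    obtain ⟨hb, hrep⟩ := ih ht
    refine ⟨hb, ?_⟩
    show e :: p.edges = List.replicate (e :: p.edges).length x
    rw [List.length_cons, List.replicate_succ]
    exact congr (congrArg List.cons he) hrep

end DGraph

open DGraph in
/-- A vertex-injective, monotone, regular path homomorphism maps every regular
vertex that is not 0-regular to a regular vertex that is not 0-regular. -/
theorem regular_non_reg0_maps_to_regular_non_reg0 (G H : DGraph) (f : G.FP → H.FP)
    (hf : IsPathHom f) (hv : VertexInjective f) (hm : EdgeMonotone f)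
    (hr : RegularHom f) (v : G.V) (hreg : RegularV G v) (h0 : ¬ Reg0V G v) :
    ∃ w : H.V, f (FP.ofVertex v) = FP.ofVertex w ∧ RegularV H w ∧ ¬ Reg0V H w := by
  obtain ⟨w, hw⟩ := hf.1 v
  obtain ⟨hfin, hne⟩ := hreg
  obtain ⟨hinj, hiff⟩ := (hr v ⟨hfin, hne⟩).1 h0
  obtain ⟨e₀, he₀⟩ := hne
  -- sources of images of edges
  have hsrc : ∀ e : G.E, G.src e = v → (f (FP.ofEdge e)).src = w := by
    intro e he
    have h1 := hf.2.1 (FP.ofEdge e)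
    have h2 : (FP.ofEdge e).src = v := he
    rw [h2, hw] at h1
    exact (congrArg FP.src h1).symm ▸ rfl
  have memImg : ∀ e : G.E, G.src e = v → f (FP.ofEdge e) ∈ EdgeImg f v :=
    fun e he => ⟨e, he, rfl⟩
  set p₀ := f (FP.ofEdge e₀) with hp₀def
  have hp₀ : p₀ ∈ EdgeImg f v := memImg e₀ he₀
  have hlen₀ : 0 < p₀.length := ((hiff p₀).mp hp₀).1
  have hps₀ : p₀.src = w := hsrc e₀ he₀
  have hx₀ : H.src (p₀.edges.get ⟨0, hlen₀⟩) = w := by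
    have := Path.src_head' p₀.2.2 hlen₀
    exact this.trans hps₀
  refine ⟨w, hw, ⟨?_, ⟨p₀.edges.get ⟨0, hlen₀⟩, hx₀⟩⟩, ?_⟩
  · -- finiteness
    have hsub : {y : H.E | H.src y = w} ⊆
        ⋃ e ∈ {e : G.E | G.src e = v}, {y : H.E | [y] <+: (f (FP.ofEdge e)).edges} := by
      intro y hy
      have hy' : H.src y = H.src (p₀.edges.get ⟨0, hlen₀⟩) := by rw [hx₀]; exact hy
      obtain ⟨q, hq, hpre⟩ := ((hiff p₀).mp hp₀).2.2 0 hlen₀ y hy'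
      obtain ⟨e, he, rfl⟩ := hq
      simp only [List.take_zero, List.nil_append] at hpre
      exact Set.mem_biUnion he hpre
    refine Set.Finite.subset (Set.Finite.biUnion hfin ?_) hsub
    intro e _
    apply Set.Subsingleton.finite
    intro y hy y' hy'
    obtain ⟨t, ht⟩ := hy
    obtain ⟨t', ht'⟩ := hy'
    have h2 : y :: t = y' :: t' := ht.trans ht'.symm
    exact (List.cons_eq_cons.mp h2).1
  · -- not 0-regular
    rintro ⟨x, hx1, hx2⟩
    have hsx : H.src x = w := by rw [Set.ext_iff] at hx1; exact (hx1 x).mpr rfl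
    -- all elements of the edge image are equal
    have step : ∀ p q : H.FP, p ∈ EdgeImg f v → q ∈ EdgeImg f v →
        p.length ≤ q.length → p = q := by
      intro p q hp hq hle
      obtain ⟨ep, hep, hfp⟩ := hp
      obtain ⟨eq', heq', hfq⟩ := hq
      have hfp' : f (FP.ofEdge ep) = p := hfp
      have hfq' : f (FP.ofEdge eq') = q := hfq
      have hpm : p ∈ EdgeImg f v := ⟨ep, hep, hfp⟩
      have hqm : q ∈ EdgeImg f v := ⟨eq', heq', hfq⟩
      have hps : p.src = w := hfp' ▸ hsrc ep hep
      have hqs : q.src = w := hfq' ▸ hsrc eq' heq'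
      obtain ⟨hpt, hpe⟩ := loop_path hx1 hx2 p.2.2 hps
      obtain ⟨hqt, hqe⟩ := loop_path hx1 hx2 q.2.2 hqs
      set r : H.FP := ⟨w, w, xpath H x w hsx hx2 (q.length - p.length)⟩ with hrdef
      have hptr : p.tgt = r.src := hpt
      have hcomp : FP.comp p r hptr = q := by
        apply FP.ext_edges'
        · show p.src = q.src
          rw [hps, hqs]
        · rw [FP.edges_comp' p r hptr]
          show p.2.2.edges ++ (xpath H x w hsx hx2 (q.length - p.length)).edges = q.2.2.edges
          rw [xpath_edges, hpe, hqe, ← List.replicate_add]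
          congr 1
          show p.length + (q.length - p.length) = q.length
          omega
      have hr0 := ((hiff p).mp hpm).2.1
      have hrtriv := hr0 r hptr (by rw [hcomp]; exact hqm)
      have hredges : r.edges = [] := by rw [hrtriv]; rfl
      have : (q.length - p.length) = 0 := by
        have := congrArg List.length hredges
        change (xpath H x w hsx hx2 (q.length - p.length)).edges.length = 0 at this
        simpa [xpath_edges] using this
      have hlene : p.length = q.length := by omega
      apply FP.ext_edges'
      · rw [hps, hqs]
      · show p.2.2.edges = q.2.2.edges
        rw [hpe, hqe]
        show List.replicate p.length x = List.replicate q.length x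
        rw [hlene]
    have hall : ∀ e : G.E, G.src e = v → e = e₀ := by
      intro e he
      apply hinj he he₀
      show f (FP.ofEdge e) = p₀
      rcases le_total (f (FP.ofEdge e)).length p₀.length with h | h
      · exact step _ _ (memImg e he) hp₀ h
      · exact (step _ _ hp₀ (memImg e he) h).symm
    have htgt : G.tgt e₀ = v := by
      have h1 := hf.2.2.1 (FP.ofEdge e₀)
      have h2 : (FP.ofEdge e₀).tgt = G.tgt e₀ := rfl
      rw [h2] at h1
      have hpt₀ : p₀.tgt = w := (loop_path hx1 hx2 p₀.2.2 hps₀).1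
      rw [← hp₀def, hpt₀, ← hw] at h1
      exact hv h1
    exact h0 ⟨e₀, Set.ext fun e => ⟨fun he => hall e he, fun he => he ▸ he₀⟩, htgt⟩
end

section
/- Let f : FP(E) → FP(F) be a vertex-injective, monotone, regular path homomorphism between graphs. Then the map f_*^L : L_k(E) → L_k(F) on Leavitt path algebras given on generators by [χ_p] ↦ [χ_{f̄(p)}] is a well-defined k-algebra homomorphism; in particular, for every regular vertex v of E, Σ_{e ∈ s⁻¹(v)} [χ_{f̄(e)}][χ_{f̄(e)*}] = [χ_{f(v)}] holds in L_k(F). The assignment is functorial and unital when restricted to graphs with finitely many vertices and maps bijective on vertices. -/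
/-- A directed graph. -/
structure LPGraph where
  V : Type
  E : Type
  src : E → V
  tgt : E → V

namespace LPGraph

/-- Finite paths from `v` to `w` in a graph. -/
inductive Path (G : LPGraph) : G.V → G.V → Type
  | nil (v : G.V) : Path G v v
  | cons (e : G.E) {w : G.V} (p : Path G (G.tgt e) w) : Path G (G.src e) w

/-- Concatenation of composable indexed paths. -/
def Path.comp {G : LPGraph} : ∀ {a b c : G.V}, G.Path a b → G.Path b c → G.Path a c
  | _, _, _, .nil _, q => q
  | _, _, _, .cons e p, q => .cons e (p.comp q)

/-- The list of edges of a path. -/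
def Path.edges {G : LPGraph} : ∀ {a b : G.V}, G.Path a b → List G.E
  | _, _, .nil _ => []
  | _, _, .cons e p => e :: p.edges

/-- The set of all finite paths of a graph (with arbitrary endpoints). -/
def FP (G : LPGraph) : Type := Σ (v : G.V) (w : G.V), G.Path v w

/-- The source (beginning) of a finite path. -/
def FP.src {G : LPGraph} (p : G.FP) : G.V := p.1

/-- The target (end) of a finite path. -/
def FP.tgt {G : LPGraph} (p : G.FP) : G.V := p.2.1

/-- The list of edges of a finite path. -/
def FP.edges {G : LPGraph} (p : G.FP) : List G.E := p.2.2.edges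

/-- The length of a finite path. -/
def FP.length {G : LPGraph} (p : G.FP) : ℕ := p.edges.length

/-- A vertex, viewed as a length-zero finite path. -/
def FP.ofVertex {G : LPGraph} (v : G.V) : G.FP := ⟨v, v, .nil v⟩

/-- An edge, viewed as a length-one finite path. -/
def FP.ofEdge {G : LPGraph} (e : G.E) : G.FP :=
  ⟨G.src e, G.tgt e, .cons e (.nil (G.tgt e))⟩

/-- Concatenation of composable finite paths. -/
def FP.comp {G : LPGraph} (p q : G.FP) (h : p.tgt = q.src) : G.FP :=
  ⟨p.1, q.2.1, p.2.2.comp (cast (congrArg (fun x => G.Path x q.2.1) h.symm) q.2.2)⟩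

/-- The prefix (extension) relation `α ⪯ β` on finite paths: `β = αγ` for some path `γ`. -/
def FP.le {G : LPGraph} (p q : G.FP) : Prop :=
  ∃ (r : G.FP) (h : p.tgt = r.src), q = p.comp r h

/-- A path homomorphism of graphs: a map on finite paths sending vertices to
vertices, intertwining the extended source and target maps, and preserving
concatenation of composable paths. -/
def IsPathHom {G H : LPGraph} (f : G.FP → H.FP) : Prop :=
  (∀ v : G.V, ∃ w : H.V, f (FP.ofVertex v) = FP.ofVertex w) ∧
  (∀ p : G.FP, f (FP.ofVertex p.src) = FP.ofVertex (f p).src) ∧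
  (∀ p : G.FP, f (FP.ofVertex p.tgt) = FP.ofVertex (f p).tgt) ∧
  (∀ (p q : G.FP) (h : p.tgt = q.src),
    ∃ h' : (f p).tgt = (f q).src, f (p.comp q h) = (f p).comp (f q) h')

/-- A map on finite paths is vertex-injective if it is injective on vertices. -/
def VertexInjective {G H : LPGraph} (f : G.FP → H.FP) : Prop :=
  Function.Injective (fun v : G.V => f (FP.ofVertex v))

/-- The monotonicity condition on edges: `f(e) ⪯ f(e′)` implies `e = e′`. -/
def EdgeMonotone {G H : LPGraph} (f : G.FP → H.FP) : Prop :=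
  ∀ e e' : G.E, FP.le (f (FP.ofEdge e)) (f (FP.ofEdge e')) → e = e'

end LPGraph

namespace LPGraph

/-- The extended (double) graph `Ē` of `E`: same vertices, edges `E¹ ⊔ (E¹)*`,
with `s(e*) = t(e)` and `t(e*) = s(e)`. -/
def ext (G : LPGraph) : LPGraph where
  V := G.V
  E := G.E ⊕ G.E
  src := Sum.elim G.src G.tgt
  tgt := Sum.elim G.tgt G.src

/-- The canonical inclusion of paths of `E` into paths of the extended graph `Ē`. -/
def Path.inclExt {G : LPGraph} : ∀ {v w : G.V}, G.Path v w → G.ext.Path v w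
  | _, _, .nil v => Path.nil (G := G.ext) v
  | _, _, .cons e p => Path.cons (G := G.ext) (Sum.inl e) p.inclExt

/-- The star (reversal) of a path of `E`, as a path of the extended graph `Ē`:
`(e₁…eₙ)* = eₙ*…e₁*`. -/
def Path.star {G : LPGraph} : ∀ {v w : G.V}, G.Path v w → G.ext.Path w v
  | _, _, .nil v => Path.nil (G := G.ext) v
  | _, _, .cons e p =>
      Path.comp p.star (Path.cons (G := G.ext) (Sum.inr e) (Path.nil (G := G.ext) (G.src e)))

/-- The canonical inclusion `FP(E) → FP(Ē)`. -/
def FP.inclExt {G : LPGraph} (p : G.FP) : G.ext.FP := ⟨p.1, p.2.1, p.2.2.inclExt⟩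

/-- The star `p ↦ p*` of finite paths, `FP(E) → FP(Ē)`. -/
def FP.star {G : LPGraph} (p : G.FP) : G.ext.FP := ⟨p.2.1, p.1, p.2.2.star⟩

/-- `fbar` is the path homomorphism `Ē → F̄` of extended graphs induced by a
path homomorphism `f : E → F`: it is a path homomorphism agreeing with `f` on
vertices and satisfying `f̄(e) = f(e)` and `f̄(e*) = f(e)*` on the two kinds of
edges of `Ē`. -/
def IsBar {G H : LPGraph} (f : G.FP → H.FP) (fbar : G.ext.FP → H.ext.FP) : Prop :=
  IsPathHom fbar ∧
  (∀ (v : G.V) (w : H.V), f (FP.ofVertex v) = FP.ofVertex w →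
    fbar (FP.ofVertex (G := G.ext) v) = FP.ofVertex (G := H.ext) w) ∧
  (∀ e : G.E, fbar (FP.ofEdge (G := G.ext) (Sum.inl e)) = FP.inclExt (f (FP.ofEdge e))) ∧
  (∀ e : G.E, fbar (FP.ofEdge (G := G.ext) (Sum.inr e)) = FP.star (f (FP.ofEdge e)))

end LPGraph

namespace LPGraph

/-- Generators of the Cohn/Leavitt path algebra of `G`: a generator `χ_v` for
each vertex, `χ_e` and `χ_{e*}` for each edge. -/
def Gen (G : LPGraph) : Type := G.V ⊕ G.E ⊕ G.E

/-- The generator of the Cohn/Leavitt path algebra corresponding to an edge of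
the extended graph `Ḡ`. -/
def genOfExtEdge {G : LPGraph} (x : G.ext.E) : Gen G :=
  Sum.elim (fun e => Sum.inr (Sum.inl e)) (fun e => Sum.inr (Sum.inr e)) x

/-- The relations defining the Cohn path algebra as a quotient of the free
algebra on the generators `χ_v, χ_e, χ_{e*}`: the path-algebra relations
`χ_v χ_w = δ_{v,w} χ_v`, `χ_{s(e)} χ_e = χ_e = χ_e χ_{t(e)}`,
`χ_{t(e)} χ_{e*} = χ_{e*} = χ_{e*} χ_{s(e)}`, together with the first
Cuntz–Krieger relation `χ_{e*} χ_f = δ_{e,f} χ_{t(e)}`. -/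
inductive CohnRel (k : Type) [Field k] (G : LPGraph) :
    FreeAlgebra k (Gen G) → FreeAlgebra k (Gen G) → Prop
  | vtx (v w : G.V) [Decidable (v = w)] :
      CohnRel k G (FreeAlgebra.ι k (Sum.inl v) * FreeAlgebra.ι k (Sum.inl w))
        (if v = w then FreeAlgebra.ι k (Sum.inl v) else 0)
  | src_edge (e : G.E) :
      CohnRel k G (FreeAlgebra.ι k (Sum.inl (G.src e)) * FreeAlgebra.ι k (Sum.inr (Sum.inl e)))
        (FreeAlgebra.ι k (Sum.inr (Sum.inl e)))
  | edge_tgt (e : G.E) :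
      CohnRel k G (FreeAlgebra.ι k (Sum.inr (Sum.inl e)) * FreeAlgebra.ι k (Sum.inl (G.tgt e)))
        (FreeAlgebra.ι k (Sum.inr (Sum.inl e)))
  | tgt_star (e : G.E) :
      CohnRel k G (FreeAlgebra.ι k (Sum.inl (G.tgt e)) * FreeAlgebra.ι k (Sum.inr (Sum.inr e)))
        (FreeAlgebra.ι k (Sum.inr (Sum.inr e)))
  | star_src (e : G.E) :
      CohnRel k G (FreeAlgebra.ι k (Sum.inr (Sum.inr e)) * FreeAlgebra.ι k (Sum.inl (G.src e)))
        (FreeAlgebra.ι k (Sum.inr (Sum.inr e)))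
  | cohn (e f : G.E) [Decidable (e = f)] :
      CohnRel k G (FreeAlgebra.ι k (Sum.inr (Sum.inr e)) * FreeAlgebra.ι k (Sum.inr (Sum.inl f)))
        (if e = f then FreeAlgebra.ι k (Sum.inl (G.tgt e)) else 0)

/-- The Cohn path algebra `C_k(G)`. -/
def CohnAlg (k : Type) [Field k] (G : LPGraph) : Type := RingQuot (CohnRel k G)

noncomputable instance (k : Type) [Field k] (G : LPGraph) : Ring (CohnAlg k G) :=
  inferInstanceAs (Ring (RingQuot (CohnRel k G)))

noncomputable instance (k : Type) [Field k] (G : LPGraph) : Algebra k (CohnAlg k G) :=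
  inferInstanceAs (Algebra k (RingQuot (CohnRel k G)))

/-- The element of the free algebra on the generators given by a finite path of
the extended graph: `χ_v` for the length-zero path at `v`, and the product
`χ_{x₁} ⋯ χ_{xₙ}` for a path `x₁…xₙ` of positive length. -/
noncomputable def freeOfFP (k : Type) [Field k] {G : LPGraph} (p : G.ext.FP) :
    FreeAlgebra k (Gen G) :=
  if p.edges.isEmpty then FreeAlgebra.ι k (Sum.inl (p.src : G.V))
  else (p.edges.map fun x => FreeAlgebra.ι k (genOfExtEdge x)).prod

/-- The class `[χ_p]` in the Cohn path algebra of a finite path `p` of the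
extended graph. -/
noncomputable def cohnPathElem (k : Type) [Field k] {G : LPGraph} (p : G.ext.FP) :
    CohnAlg k G :=
  RingQuot.mkAlgHom k (CohnRel k G) (freeOfFP k p)

end LPGraph

namespace LPGraph

/-- A vertex is regular if it emits at least one and only finitely many edges. -/
def RegularV (G : LPGraph) (v : G.V) : Prop :=
  {e : G.E | G.src e = v}.Finite ∧ {e : G.E | G.src e = v}.Nonempty

/-- A vertex is 0-regular if it emits exactly one edge and that edge is a loop
at the vertex. -/
def Reg0V (G : LPGraph) (v : G.V) : Prop :=
  ∃ e : G.E, {x : G.E | G.src x = v} = {e} ∧ G.tgt e = v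

/-- The image `f(s⁻¹(v))` of the set of edges emitted from `v`. -/
def EdgeImg {G H : LPGraph} (f : G.FP → H.FP) (v : G.V) : Set H.FP :=
  (fun e => f (FP.ofEdge e)) '' {e : G.E | G.src e = v}

/-- The regularity condition at a vertex `v`: `f` is injective on `s⁻¹(v)`, and
`p ∈ f(s⁻¹(v))` if and only if (i) `p` is a path of positive length, (ii) any
extension `pq ∈ f(s⁻¹(v))` has `q` trivial, and (iii) for every `i` and every
edge `x` with the same source as the `i`-th edge of `p`, some element of
`f(s⁻¹(v))` extends `e₁…e_{i−1}x`. -/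
def RegCond {G H : LPGraph} (f : G.FP → H.FP) (v : G.V) : Prop :=
  Set.InjOn (fun e => f (FP.ofEdge e)) {e : G.E | G.src e = v} ∧
  ∀ p : H.FP, p ∈ EdgeImg f v ↔
    (0 < p.length ∧
     (∀ (q : H.FP) (h : p.tgt = q.src),
        FP.comp p q h ∈ EdgeImg f v → q = FP.ofVertex p.tgt) ∧
     (∀ (i : ℕ) (hi : i < p.length) (x : H.E),
        H.src x = H.src (p.edges.get ⟨i, hi⟩) →
        ∃ q ∈ EdgeImg f v, (p.edges.take i ++ [x]) <+: q.edges))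

/-- A path homomorphism is regular if the regularity condition holds at every
regular vertex which is not 0-regular, and at every 0-regular vertex either the
regularity condition holds or `f(s⁻¹(v)) = {f(v)}`. -/
def RegularHom {G H : LPGraph} (f : G.FP → H.FP) : Prop :=
  ∀ v : G.V, RegularV G v →
    ((¬ Reg0V G v → RegCond f v) ∧
     (Reg0V G v → (RegCond f v ∨ EdgeImg f v = {f (FP.ofVertex v)})))

end LPGraph

namespace LPGraph

/-- The relations defining the Leavitt path algebra: the Cohn relations
together with the second Cuntz–Krieger relation
`Σ_{e ∈ s⁻¹(v)} χ_e χ_{e*} = χ_v` for every regular vertex `v`. -/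
def LeavittRel (k : Type) [Field k] (G : LPGraph)
    (a b : FreeAlgebra k (Gen G)) : Prop :=
  CohnRel k G a b ∨
    ∃ (v : G.V) (h : {e : G.E | G.src e = v}.Finite),
      {e : G.E | G.src e = v}.Nonempty ∧
      a = ∑ e ∈ h.toFinset,
            FreeAlgebra.ι k (Sum.inr (Sum.inl e)) * FreeAlgebra.ι k (Sum.inr (Sum.inr e)) ∧
      b = FreeAlgebra.ι k (Sum.inl v)

/-- The Leavitt path algebra `L_k(G)`. -/
def LeavittAlg (k : Type) [Field k] (G : LPGraph) : Type := RingQuot (LeavittRel k G)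

noncomputable instance (k : Type) [Field k] (G : LPGraph) : Ring (LeavittAlg k G) :=
  inferInstanceAs (Ring (RingQuot (LeavittRel k G)))

noncomputable instance (k : Type) [Field k] (G : LPGraph) : Algebra k (LeavittAlg k G) :=
  inferInstanceAs (Algebra k (RingQuot (LeavittRel k G)))

/-- The class `[χ_p]` in the Leavitt path algebra of a finite path `p` of the
extended graph. -/
noncomputable def leavittPathElem (k : Type) [Field k] {G : LPGraph} (p : G.ext.FP) :
    LeavittAlg k G :=
  RingQuot.mkAlgHom k (LeavittRel k G) (freeOfFP k p)

end LPGraph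

namespace LPGraph

/-! ### Pure path lemmas -/

theorem Path.comp_nil {K : LPGraph} : ∀ {a b : K.V} (p : K.Path a b), p.comp (.nil b) = p
  | _, _, .nil v => rfl
  | _, _, .cons e p => by rw [show (Path.cons e p).comp (.nil _) = .cons e (p.comp (.nil _)) from rfl,
      Path.comp_nil]

theorem Path.comp_assoc {K : LPGraph} : ∀ {a b c d : K.V} (p : K.Path a b) (q : K.Path b c)
    (r : K.Path c d), (p.comp q).comp r = p.comp (q.comp r)
  | _, _, _, _, .nil v, q, r => rfl
  | _, _, _, _, .cons e p, q, r => by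
      show Path.cons e ((p.comp q).comp r) = Path.cons e (p.comp (q.comp r))
      rw [Path.comp_assoc]

theorem Path.edges_comp {K : LPGraph} : ∀ {a b c : K.V} (p : K.Path a b) (q : K.Path b c),
    (p.comp q).edges = p.edges ++ q.edges
  | _, _, _, .nil v, q => rfl
  | _, _, _, .cons e p, q => by
      show e :: (p.comp q).edges = (e :: p.edges) ++ q.edges
      rw [Path.edges_comp]; rfl

theorem FP.ofVertex_inj {K : LPGraph} {v w : K.V} (h : FP.ofVertex (G := K) v = FP.ofVertex w) :
    v = w := congrArg Sigma.fst h

theorem fp_cases {K : LPGraph} (q : K.FP) :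
    (∃ v, q = FP.ofVertex v) ∨
    ∃ (e : K.E) (t : K.FP) (h : (FP.ofEdge e).tgt = t.src),
      q = (FP.ofEdge e).comp t h ∧ q.edges = e :: t.edges := by
  obtain ⟨a, b, pp⟩ := q
  cases pp with
  | nil => exact Or.inl ⟨_, rfl⟩
  | cons e t => exact Or.inr ⟨e, ⟨K.tgt e, b, t⟩, rfl, rfl, rfl⟩

theorem fp_comp_assoc {K : LPGraph} (p q r : K.FP) (h1 : p.tgt = q.src) (h2 : q.tgt = r.src) :
    (p.comp q h1).comp r h2 = p.comp (q.comp r h2) h1 := by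
  obtain ⟨a, b, pp⟩ := p; obtain ⟨c, d, qq⟩ := q; obtain ⟨x, y, rr⟩ := r
  have hb : b = c := h1; subst hb
  have hd : d = x := h2; subst hd
  show (⟨a, y, (pp.comp qq).comp rr⟩ : K.FP) = ⟨a, y, pp.comp (qq.comp rr)⟩
  rw [Path.comp_assoc]

theorem fp_comp_ofVertex {K : LPGraph} (p : K.FP) :
    p.comp (FP.ofVertex p.tgt) rfl = p := by
  obtain ⟨a, b, pp⟩ := p
  show (⟨a, b, pp.comp (.nil b)⟩ : K.FP) = ⟨a, b, pp⟩
  rw [Path.comp_nil]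

theorem fp_edges_comp {K : LPGraph} (p q : K.FP) (h : p.tgt = q.src) :
    (p.comp q h).edges = p.edges ++ q.edges := by
  obtain ⟨a, b, pp⟩ := p; obtain ⟨c, d, qq⟩ := q
  have hb : b = c := h; subst hb
  exact Path.edges_comp pp qq

theorem fp_exists_comp {K : LPGraph} : ∀ (n : ℕ) (p q : K.FP), p.edges.length ≤ n →
    p.src = q.src → p.edges <+: q.edges →
    ∃ (r : K.FP) (h : p.tgt = r.src), q = p.comp r h := by
  intro n
  induction n with
  | zero =>
    intro p q hlen hsrc _
    rcases fp_cases p with ⟨v, rfl⟩ | ⟨e, t, h, rfl, hedges⟩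
    · refine ⟨q, hsrc, ?_⟩
      obtain ⟨a, b, qq⟩ := q
      have ha : v = a := hsrc; subst ha
      rfl
    · rw [show FP.edges ((FP.ofEdge e).comp t h) = _ ++ _ from fp_edges_comp _ _ _] at hlen
      simp [FP.ofEdge, FP.edges, Path.edges] at hlen
  | succ n ih =>
    intro p q hlen hsrc hpre
    rcases fp_cases p with ⟨v, rfl⟩ | ⟨e, t, h, rfl, hedges⟩
    · refine ⟨q, hsrc, ?_⟩
      obtain ⟨a, b, qq⟩ := q
      have ha : v = a := hsrc; subst ha
      rfl
    · rcases fp_cases q with ⟨w, rfl⟩ | ⟨e', t', h', rfl, hedges'⟩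
      · rw [hedges] at hpre
        have : (FP.ofVertex (G := K) w).edges = [] := rfl
        rw [this] at hpre
        exact absurd hpre.length_le (by simp)
      · rw [hedges, hedges', List.cons_prefix_cons] at hpre
        obtain ⟨he, hpre⟩ := hpre
        subst he
        have hts : t.src = t'.src := by rw [← h, ← h']
        obtain ⟨r, hr, hcomp⟩ := ih t t' (by rw [hedges] at hlen; simpa using hlen) hts hpre
        refine ⟨r, hr, ?_⟩
        subst hcomp
        exact (fp_comp_assoc _ _ _ _ _).symm

theorem fp_le_of_prefix {K : LPGraph} (p q : K.FP) (hsrc : p.src = q.src)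
    (hpre : p.edges <+: q.edges) : FP.le p q := by
  obtain ⟨r, h, hc⟩ := fp_exists_comp p.edges.length p q le_rfl hsrc hpre
  exact ⟨r, h, hc⟩

theorem fp_le_edges {K : LPGraph} {p q : K.FP} (h : FP.le p q) :
    p.src = q.src ∧ p.edges <+: q.edges := by
  obtain ⟨r, h, rfl⟩ := h
  constructor
  · rfl
  · rw [fp_edges_comp]; exact ⟨_, rfl⟩

end LPGraph
namespace LPGraph

variable (k : Type) [Field k]

/-- The generator classes in the Leavitt path algebra. -/
noncomputable def LX (H : LPGraph) (g : Gen H) : LeavittAlg k H :=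
  RingQuot.mkAlgHom k (LeavittRel k H) (FreeAlgebra.ι k g)

variable (H : LPGraph)

theorem crel {a b : FreeAlgebra k (Gen H)} (h : CohnRel k H a b) :
    RingQuot.mkAlgHom k (LeavittRel k H) a = RingQuot.mkAlgHom k (LeavittRel k H) b :=
  RingQuot.mkAlgHom_rel k (Or.inl h)

theorem LX_vtx (v w : H.V) [Decidable (v = w)] :
    LX k H (Sum.inl v) * LX k H (Sum.inl w) =
    if v = w then LX k H (Sum.inl v) else 0 := by
  have h := crel k H (CohnRel.vtx (k := k) (G := H) v w)
  erw [map_mul] at h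
  simp only [LX]
  erw [h]
  split_ifs with hvw
  · exact (if_pos hvw).symm
  · exact (map_zero _).trans (if_neg hvw).symm

theorem LX_vtx_self (v : H.V) :
    LX k H (Sum.inl v) * LX k H (Sum.inl v) = LX k H (Sum.inl v) := by
  classical
  rw [LX_vtx]; simp

theorem LX_vtx_ne {v w : H.V} (h : v ≠ w) :
    LX k H (Sum.inl v) * LX k H (Sum.inl w) = 0 := by
  classical
  rw [LX_vtx]; simp [h]

theorem LX_src_edge (e : H.E) :
    LX k H (Sum.inl (H.src e)) * LX k H (Sum.inr (Sum.inl e)) = LX k H (Sum.inr (Sum.inl e)) := by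
  have h := crel k H (CohnRel.src_edge (k := k) (G := H) e)
  erw [map_mul] at h
  simp only [LX]; erw [h]

theorem LX_edge_tgt (e : H.E) :
    LX k H (Sum.inr (Sum.inl e)) * LX k H (Sum.inl (H.tgt e)) = LX k H (Sum.inr (Sum.inl e)) := by
  have h := crel k H (CohnRel.edge_tgt (k := k) (G := H) e)
  erw [map_mul] at h
  simp only [LX]; erw [h]

theorem LX_tgt_star (e : H.E) :
    LX k H (Sum.inl (H.tgt e)) * LX k H (Sum.inr (Sum.inr e)) = LX k H (Sum.inr (Sum.inr e)) := by
  have h := crel k H (CohnRel.tgt_star (k := k) (G := H) e)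
  erw [map_mul] at h
  simp only [LX]; erw [h]

theorem LX_star_src (e : H.E) :
    LX k H (Sum.inr (Sum.inr e)) * LX k H (Sum.inl (H.src e)) = LX k H (Sum.inr (Sum.inr e)) := by
  have h := crel k H (CohnRel.star_src (k := k) (G := H) e)
  erw [map_mul] at h
  simp only [LX]; erw [h]

theorem LX_cohn (e f : H.E) [Decidable (e = f)] :
    LX k H (Sum.inr (Sum.inr e)) * LX k H (Sum.inr (Sum.inl f)) =
    if e = f then LX k H (Sum.inl (H.tgt e)) else 0 := by
  have h := crel k H (CohnRel.cohn (k := k) (G := H) e f)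
  erw [map_mul] at h
  simp only [LX]
  erw [h]
  split_ifs with hef
  · exact (if_pos hef).symm
  · exact (map_zero _).trans (if_neg hef).symm

theorem LX_cohn_self (e : H.E) :
    LX k H (Sum.inr (Sum.inr e)) * LX k H (Sum.inr (Sum.inl e)) =
      LX k H (Sum.inl (H.tgt e)) := by
  classical
  rw [LX_cohn]; simp

theorem LX_cohn_ne {e f : H.E} (h : e ≠ f) :
    LX k H (Sum.inr (Sum.inr e)) * LX k H (Sum.inr (Sum.inl f)) = 0 := by
  classical
  rw [LX_cohn]; simp [h]

theorem LX_ck2 (v : H.V) (hfin : {e : H.E | H.src e = v}.Finite)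
    (hne : {e : H.E | H.src e = v}.Nonempty) :
    ∑ e ∈ hfin.toFinset, LX k H (Sum.inr (Sum.inl e)) * LX k H (Sum.inr (Sum.inr e)) =
      LX k H (Sum.inl v) := by
  have hrel : LeavittRel k H
      (∑ e ∈ hfin.toFinset,
        FreeAlgebra.ι k (Sum.inr (Sum.inl e)) * FreeAlgebra.ι k (Sum.inr (Sum.inr e)))
      (FreeAlgebra.ι k (Sum.inl v)) := Or.inr ⟨v, hfin, hne, rfl, rfl⟩
  have h := RingQuot.mkAlgHom_rel k hrel
  erw [map_sum] at h; simp only [LX]; rw [← h]; exact Finset.sum_congr rfl fun e _ => (map_mul _ _ _).symm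

@[simp] theorem genOfExtEdge_inl {G : LPGraph} (e : G.E) :
    genOfExtEdge (G := G) (Sum.inl e) = Sum.inr (Sum.inl e) := rfl

@[simp] theorem genOfExtEdge_inr {G : LPGraph} (e : G.E) :
    genOfExtEdge (G := G) (Sum.inr e) = Sum.inr (Sum.inr e) := rfl

theorem LX_absorbL (x : H.ext.E) :
    LX k H (Sum.inl (H.ext.src x)) * LX k H (genOfExtEdge x) = LX k H (genOfExtEdge x) := by
  cases x with
  | inl e => exact LX_src_edge k H e
  | inr e => exact LX_tgt_star k H e

theorem LX_absorbR (x : H.ext.E) :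
    LX k H (genOfExtEdge x) * LX k H (Sum.inl (H.ext.tgt x)) = LX k H (genOfExtEdge x) := by
  cases x with
  | inl e => exact LX_edge_tgt k H e
  | inr e => exact LX_star_src k H e

/-- `elP p` is the element of the Leavitt path algebra given by a path of the
extended graph. -/
noncomputable def elP : ∀ {a b : H.ext.V}, H.ext.Path a b → LeavittAlg k H
  | _, _, .nil v => LX k H (Sum.inl v)
  | _, _, .cons x p => LX k H (genOfExtEdge x) * elP p

@[simp] theorem elP_nil (v : H.ext.V) : elP k H (.nil v) = LX k H (Sum.inl v) := rfl

theorem elP_cons (x : H.ext.E) {b : H.ext.V} (p : H.ext.Path (H.ext.tgt x) b) :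
    elP k H (.cons x p) = LX k H (genOfExtEdge x) * elP k H p := rfl

theorem elP_absorbL {a b : H.ext.V} (p : H.ext.Path a b) :
    LX k H (Sum.inl a) * elP k H p = elP k H p := by
  cases p with
  | nil => exact LX_vtx_self k H _
  | cons x p => rw [elP_cons, ← mul_assoc, LX_absorbL]

theorem elP_absorbR {a b : H.ext.V} (p : H.ext.Path a b) :
    elP k H p * LX k H (Sum.inl b) = elP k H p := by
  induction p with
  | nil => exact LX_vtx_self k H _
  | cons x p ih => rw [elP_cons, mul_assoc, ih]

theorem elP_comp {a b c : H.ext.V} (p : H.ext.Path a b) (q : H.ext.Path b c) :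
    elP k H (p.comp q) = elP k H p * elP k H q := by
  induction p with
  | nil v =>
    show elP k H q = elP k H (.nil v) * elP k H q
    rw [elP_nil, elP_absorbL]
  | cons x p ih =>
    show elP k H (.cons x (p.comp q)) = _
    rw [elP_cons, elP_cons, mul_assoc, ih]

theorem elP_unit_star (e : H.E) :
    elP k H (Path.cons (G := H.ext) (Sum.inr e) (Path.nil (G := H.ext) (H.src e))) =
      LX k H (Sum.inr (Sum.inr e)) := by
  show LX k H (genOfExtEdge (G := H) (Sum.inr e)) * LX k H (Sum.inl (H.src e)) = _
  rw [genOfExtEdge_inr, LX_star_src]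

theorem elP_unit_incl (e : H.E) :
    elP k H (Path.cons (G := H.ext) (Sum.inl e) (Path.nil (G := H.ext) (H.tgt e))) =
      LX k H (Sum.inr (Sum.inl e)) := by
  show LX k H (genOfExtEdge (G := H) (Sum.inl e)) * LX k H (Sum.inl (H.tgt e)) = _
  rw [genOfExtEdge_inl, LX_edge_tgt]

theorem elP_star_cons (e : H.E) {b : H.V} (p : H.Path (H.tgt e) b) :
    elP k H (Path.star (.cons e p)) = elP k H p.star * LX k H (Sum.inr (Sum.inr e)) := by
  have h1 : elP k H (Path.star (.cons e p)) =
      elP k H p.star *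
        elP k H (Path.cons (G := H.ext) (Sum.inr e) (Path.nil (G := H.ext) (H.src e))) :=
    elP_comp k H p.star _
  rw [h1, elP_unit_star]

theorem elP_incl_cons (e : H.E) {b : H.V} (p : H.Path (H.tgt e) b) :
    elP k H (Path.inclExt (.cons e p)) = LX k H (Sum.inr (Sum.inl e)) * elP k H p.inclExt := rfl

theorem elP_ck1 {a b : H.V} (p : H.Path a b) :
    elP k H p.star * elP k H p.inclExt = LX k H (Sum.inl b) := by
  induction p with
  | nil =>
    exact LX_vtx_self k H _
  | cons e p ih =>
    erw [elP_star_cons, elP_incl_cons, mul_assoc,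
      ← mul_assoc (LX k H (Sum.inr (Sum.inr e))), LX_cohn_self, elP_absorbL, ih]

end LPGraph
namespace LPGraph

variable (k : Type) [Field k] (H : LPGraph)

/-- The product of the generators along a list of extended edges. -/
noncomputable def LP (l : List H.ext.E) : LeavittAlg k H :=
  (l.map (fun x => LX k H (genOfExtEdge x))).prod

@[simp] theorem LP_nil : LP k H [] = 1 := rfl

theorem LP_cons (x : H.ext.E) (l : List H.ext.E) :
    LP k H (x :: l) = LX k H (genOfExtEdge x) * LP k H l := rfl

theorem elP_eq_LP {a d : H.ext.V} (pp : H.ext.Path a d) :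
    ∀ (x : H.ext.E), H.ext.tgt x = a →
      LX k H (genOfExtEdge x) * elP k H pp = LX k H (genOfExtEdge x) * LP k H pp.edges := by
  induction pp with
  | nil =>
    rename_i v
    intro x hx
    subst hx
    rw [show Path.edges (G := H.ext) (.nil (H.ext.tgt x)) = [] from rfl, LP_nil, mul_one,
      elP_nil, LX_absorbR]
  | cons y tt ih =>
    intro x hx
    rw [elP_cons, show Path.edges (G := H.ext) (.cons y tt) = y :: tt.edges from rfl, LP_cons]
    exact congrArg (LX k H (genOfExtEdge x) * ·) (ih y rfl)

theorem el_eq_elP (p : H.ext.FP) : leavittPathElem k p = elP k H p.2.2 := by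
  obtain ⟨a, d, pp⟩ := p
  cases pp with
  | nil => rfl
  | cons x tt =>
    show RingQuot.mkAlgHom k (LeavittRel k H)
      (((Path.cons x tt).edges).map (fun y => FreeAlgebra.ι k (genOfExtEdge y))).prod =
      elP k H (Path.cons x tt)
    rw [map_list_prod, List.map_map]
    show LP k H ((Path.cons x tt).edges) = _
    rw [show Path.edges (G := H.ext) (.cons x tt) = x :: tt.edges from rfl, LP_cons,
      show elP k H (Path.cons x tt) = LX k H (genOfExtEdge x) * elP k H tt from rfl]
    exact (elP_eq_LP k H tt x rfl).symm

theorem el_ofVertex (v : H.ext.V) :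
    leavittPathElem k (FP.ofVertex (G := H.ext) v) = LX k H (Sum.inl v) := rfl

theorem el_comp (p q : H.ext.FP) (h : p.tgt = q.src) :
    leavittPathElem k (p.comp q h) = leavittPathElem k p * leavittPathElem k q := by
  obtain ⟨a, b, pp⟩ := p; obtain ⟨c, d, qq⟩ := q
  have hb : b = c := h; subst hb
  erw [el_eq_elP, el_eq_elP, el_eq_elP]
  exact elP_comp k H pp qq

theorem el_inclExt (q : H.FP) :
    leavittPathElem k (FP.inclExt q) = elP k H q.2.2.inclExt := by
  obtain ⟨a, b, qq⟩ := q
  exact el_eq_elP k H ⟨a, b, qq.inclExt⟩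

theorem el_star (q : H.FP) :
    leavittPathElem k (FP.star q) = elP k H q.2.2.star := by
  obtain ⟨a, b, qq⟩ := q
  exact el_eq_elP k H ⟨b, a, qq.star⟩

theorem elP_orth {a b : H.V} (p : H.Path a b) : ∀ {a' d : H.V} (q : H.Path a' d),
    (a = a' → ¬(p.edges <+: q.edges) ∧ ¬(q.edges <+: p.edges)) →
    elP k H p.star * elP k H q.inclExt = 0 := by
  induction p with
  | nil =>
    rename_i v
    intro a' d q hq
    have hne : v ≠ a' := fun h => ((hq h).1 List.nil_prefix)
    show LX k H (Sum.inl v) * elP k H q.inclExt = 0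
    rw [← elP_absorbL k H q.inclExt, ← mul_assoc, LX_vtx_ne k H hne, zero_mul]
  | cons e p ih =>
    intro a' d q hq
    cases q with
    | nil =>
      have hne : H.src e ≠ a' := fun h => ((hq h).2 List.nil_prefix)
      show elP k H (Path.star (.cons e p)) * LX k H (Sum.inl a') = 0
      rw [elP_star_cons, mul_assoc, ← LX_star_src k H e, mul_assoc,
        LX_vtx_ne k H hne]
      simp
    | cons e' q' =>
      by_cases hee : H.src e = H.src e'
      · by_cases he : e = e'
        · subst he
          obtain ⟨h1, h2⟩ := hq hee
          have h1' : ¬(p.edges <+: q'.edges) := fun hp => h1 (by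
            show e :: p.edges <+: e :: q'.edges
            exact (List.cons_prefix_cons).mpr ⟨rfl, hp⟩)
          have h2' : ¬(q'.edges <+: p.edges) := fun hp => h2 (by
            show e :: q'.edges <+: e :: p.edges
            exact (List.cons_prefix_cons).mpr ⟨rfl, hp⟩)
          erw [elP_star_cons, elP_incl_cons, mul_assoc,
            ← mul_assoc (LX k H (Sum.inr (Sum.inr e))), LX_cohn_self, elP_absorbL]
          exact ih q' (fun _ => ⟨h1', h2'⟩)
        · rw [elP_star_cons, elP_incl_cons, mul_assoc,
            ← mul_assoc (LX k H (Sum.inr (Sum.inr e))), LX_cohn_ne k H he]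
          simp
      · rw [elP_star_cons, elP_incl_cons, ← LX_star_src k H e, ← LX_src_edge k H e',
          mul_assoc, mul_assoc, mul_assoc,
          ← mul_assoc (LX k H (Sum.inl (H.src e))), LX_vtx_ne k H hee]
        simp

end LPGraph
namespace LPGraph

/-- The tail of a finite path (drops the first edge). -/
def FPtail {K : LPGraph} : K.FP → K.FP
  | ⟨_, _, .nil v⟩ => ⟨v, v, .nil v⟩
  | ⟨_, b, .cons e r⟩ => ⟨K.tgt e, b, r⟩

theorem fp_path_nil {K : LPGraph} : ∀ {a b : K.V} (r : K.Path a b), r.edges = [] →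
    (⟨a, b, r⟩ : K.FP) = ⟨a, a, .nil a⟩
  | _, _, .nil v, _ => rfl
  | _, _, .cons e r, h => by simp [Path.edges] at h

theorem fp_head_decomp {K : LPGraph} (q : K.FP) (x : K.E) (hx : q.edges.head? = some x) :
    q.1 = K.src x ∧ (FPtail q).1 = K.tgt x ∧ q.edges = x :: (FPtail q).edges := by
  obtain ⟨a, b, pp⟩ := q
  cases pp with
  | nil => simp [FP.edges, Path.edges] at hx
  | cons e r =>
    have he : e = x := by simpa [FP.edges, Path.edges] using hx
    subst he
    exact ⟨rfl, rfl, rfl⟩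

theorem fp_get_zero {K : LPGraph} (q : K.FP) (h : 0 < q.edges.length) :
    K.src (q.edges.get ⟨0, h⟩) = q.1 := by
  obtain ⟨a, b, pp⟩ := q
  cases pp with
  | nil => simp [FP.edges, Path.edges] at h
  | cons e r => rfl

theorem fp_cons_ext {K : LPGraph} {e : K.E} {b b' : K.V} {r : K.Path (K.tgt e) b}
    {r' : K.Path (K.tgt e) b'} (h : (⟨K.tgt e, b, r⟩ : K.FP) = ⟨K.tgt e, b', r'⟩) :
    (⟨K.src e, b, .cons e r⟩ : K.FP) = ⟨K.src e, b', .cons e r'⟩ := by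
  have hb : b = b' := congrArg (fun z => z.2.1) h
  subst hb
  injection h with h1 h2
  injection h2 with h3 h4
  rw [h4]

theorem fp_tail_inj {K : LPGraph} (q q' : K.FP) (x : K.E) (hq : q.edges.head? = some x)
    (hq' : q'.edges.head? = some x) (h : FPtail q = FPtail q') : q = q' := by
  obtain ⟨a, b, pp⟩ := q; obtain ⟨a', b', pp'⟩ := q'
  cases pp with
  | nil => simp [FP.edges, Path.edges] at hq
  | cons e r =>
    cases pp' with
    | nil => simp [FP.edges, Path.edges] at hq'
    | cons e' r' =>
      have he : e = x := by simpa [FP.edges, Path.edges] using hq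
      have he' : e' = x := by simpa [FP.edges, Path.edges] using hq'
      subst he
      subst he'
      exact fp_cons_ext h

theorem fp_len_one {K : LPGraph} (q : K.FP) (x : K.E) (hqh : q.edges.head? = some x)
    (htnil : (FPtail q).edges = []) : q = FP.ofEdge x := by
  obtain ⟨a, b, pp⟩ := q
  cases pp with
  | nil => simp [FP.edges, Path.edges] at hqh
  | cons e r =>
    have he : e = x := by simpa [FP.edges, Path.edges] using hqh
    subst he
    exact fp_cons_ext (fp_path_nil r htnil)

theorem fp_head?_of_pos {K : LPGraph} (l : List K.E) (h : 0 < l.length) :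
    l.head? = some (l.get ⟨0, h⟩) := by
  cases l with
  | nil => simp at h
  | cons a t => rfl

variable (k : Type) [Field k] (H : LPGraph)

/-- The element `[χ_p][χ_{p*}]` attached to a finite path of `H`. -/
noncomputable def mm (q : H.FP) : LeavittAlg k H :=
  elP k H q.2.2.inclExt * elP k H q.2.2.star

theorem mm_ofVertex (v : H.V) : mm k H ⟨v, v, .nil v⟩ = LX k H (Sum.inl v) :=
  LX_vtx_self k H v

theorem mm_ofEdge (x : H.E) : mm k H (FP.ofEdge x) =
    LX k H (Sum.inr (Sum.inl x)) * LX k H (Sum.inr (Sum.inr x)) := by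
  show elP k H (Path.inclExt (.cons x (.nil (H.tgt x)))) *
    elP k H (Path.star (.cons x (.nil (H.tgt x)))) = _
  rw [elP_incl_cons, elP_star_cons]
  rw [show elP k H (Path.inclExt (.nil (H.tgt x))) = LX k H (Sum.inl (H.tgt x)) from rfl,
    show elP k H (Path.star (.nil (H.tgt x))) = LX k H (Sum.inl (H.tgt x)) from rfl,
    LX_edge_tgt, LX_tgt_star]

theorem mm_head (q : H.FP) (x : H.E) (hx : q.edges.head? = some x) :
    mm k H q = LX k H (Sum.inr (Sum.inl x)) * mm k H (FPtail q) * LX k H (Sum.inr (Sum.inr x)) := by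
  obtain ⟨a, b, pp⟩ := q
  cases pp with
  | nil => simp [FP.edges, Path.edges] at hx
  | cons e r =>
    have he : e = x := by simpa [FP.edges, Path.edges] using hx
    subst he
    show elP k H (Path.inclExt (.cons e r)) * elP k H (Path.star (.cons e r)) = _
    rw [elP_incl_cons, elP_star_cons]
    show _ = LX k H (Sum.inr (Sum.inl e)) * (elP k H r.inclExt * elP k H r.star) *
      LX k H (Sum.inr (Sum.inr e))
    simp [mul_assoc]

theorem keyB : ∀ (n : ℕ) (w : H.V) (T : Finset H.FP),
    (∑ q ∈ T, q.edges.length) < n →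
    (∀ q ∈ T, q.1 = w) →
    (∀ q ∈ T, 0 < q.edges.length) →
    (∀ p ∈ T, ∀ q ∈ T, p.edges <+: q.edges → p = q) →
    (∀ p ∈ T, ∀ (i : ℕ) (hi : i < p.edges.length) (x : H.E),
        H.src x = H.src (p.edges.get ⟨i, hi⟩) →
        ∃ q ∈ T, (p.edges.take i ++ [x]) <+: q.edges) →
    T.Nonempty →
    ∑ q ∈ T, mm k H q = LX k H (Sum.inl w) := by
  intro n
  induction n with
  | zero => exact fun w T h => absurd h (Nat.not_lt_zero _)
  | succ n ih =>
    intro w T hlt h1 h2 h3 h4 hne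
    classical
    obtain ⟨p₀, hp₀⟩ := hne
    -- every element of T has a head edge emitted from w
    have hhd : ∀ q ∈ T, ∃ x, q.edges.head? = some x ∧ H.src x = w := by
      intro q hq
      have h0 : 0 < q.edges.length := h2 q hq
      exact ⟨q.edges.get ⟨0, h0⟩, fp_head?_of_pos _ h0,
        by rw [fp_get_zero q h0]; exact h1 q hq⟩
    -- every edge emitted from w is the head of some element of T
    have hcov : ∀ x : H.E, H.src x = w → ∃ q ∈ T, q.edges.head? = some x := by
      intro x hx
      have h0 : 0 < p₀.edges.length := h2 p₀ hp₀
      obtain ⟨q, hq, hpre⟩ := h4 p₀ hp₀ 0 h0 x (by rw [fp_get_zero p₀ h0, h1 p₀ hp₀]; exact hx)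
      refine ⟨q, hq, ?_⟩
      rw [List.take_zero, List.nil_append] at hpre
      obtain ⟨t, ht⟩ := hpre
      rw [← ht]; rfl
    -- the set of edges emitted from w is finite and nonempty
    have hSfin : {x : H.E | H.src x = w}.Finite := by
      have himg : ((fun q : H.FP => q.edges.head?) '' ↑T).Finite := T.finite_toSet.image _
      have h1fin : (Option.some '' {x : H.E | H.src x = w}).Finite := by
        refine himg.subset ?_
        rintro _ ⟨x, hx, rfl⟩
        obtain ⟨q, hq, hh⟩ := hcov x hx
        exact ⟨q, hq, hh⟩
      exact Set.Finite.of_finite_image h1fin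
        (Set.injOn_of_injective (Option.some_injective _))
    have hSne : {x : H.E | H.src x = w}.Nonempty := by
      obtain ⟨x, _, hx⟩ := hhd p₀ hp₀
      exact ⟨x, hx⟩
    -- fiberwise decomposition of the sum according to the head edge
    have hmaps : ∀ q ∈ T, q.edges.head? ∈ hSfin.toFinset.image Option.some := by
      intro q hq
      obtain ⟨x, hh, hx⟩ := hhd q hq
      exact Finset.mem_image.2 ⟨x, hSfin.mem_toFinset.2 hx, hh.symm⟩
    have hfib := Finset.sum_fiberwise_of_maps_to hmaps (mm k H)
    rw [← hfib]
    rw [Finset.sum_image (fun x _ y _ h => Option.some_injective _ h)]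
    -- per-fiber computation
    have hper : ∀ x ∈ hSfin.toFinset,
        ∑ q ∈ T.filter (fun q => q.edges.head? = some x), mm k H q =
          LX k H (Sum.inr (Sum.inl x)) * LX k H (Sum.inr (Sum.inr x)) := by
      intro x hxw
      have hxw' : H.src x = w := hSfin.mem_toFinset.1 hxw
      set Tx := T.filter (fun q => q.edges.head? = some x) with hTx
      have hTxsub : Tx ⊆ T := Finset.filter_subset _ _
      have hTxne : Tx.Nonempty := by
        obtain ⟨q, hq, hh⟩ := hcov x hxw'
        exact ⟨q, Finset.mem_filter.2 ⟨hq, hh⟩⟩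
      by_cases hone : FP.ofEdge (G := H) x ∈ Tx
      · -- the fiber is the singleton {x}
        have hTxeq : Tx = {FP.ofEdge (G := H) x} := by
          apply Finset.ext
          intro q
          simp only [Finset.mem_singleton]
          constructor
          · intro hq
            obtain ⟨hqT, hqh⟩ := Finset.mem_filter.1 hq
            obtain ⟨-, -, hqe⟩ := fp_head_decomp q x hqh
            have hpre : (FP.ofEdge (G := H) x).edges <+: q.edges :=
              ⟨(FPtail q).edges, hqe.symm⟩
            exact (h3 _ (hTxsub hone) q hqT hpre).symm
          · intro hq; rw [hq]; exact hone
        rw [hTxeq, Finset.sum_singleton, mm_ofEdge]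
      · -- every element of the fiber has length at least 2
        have hlen2 : ∀ q ∈ Tx, 2 ≤ q.edges.length := by
          intro q hq
          obtain ⟨hqT, hqh⟩ := Finset.mem_filter.1 hq
          obtain ⟨hq1, hqt, hqe⟩ := fp_head_decomp q x hqh
          by_contra hcon
          push_neg at hcon
          have hl1 : q.edges.length = 1 := by
            have := h2 q hqT; omega
          have htnil : (FPtail q).edges = [] := by
            rw [hqe] at hl1
            simpa using hl1
          exact hone ((fp_len_one q x hqh htnil) ▸ hq)
        -- pass to the set of tails
        set T' := Tx.image FPtail with hT'
        have hinj : ∀ q ∈ Tx, ∀ q' ∈ Tx, FPtail q = FPtail q' → q = q' := by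
          intro q hq q' hq'
          exact fp_tail_inj q q' x (Finset.mem_filter.1 hq).2 (Finset.mem_filter.1 hq').2
        have hsum_img : ∑ q' ∈ T', mm k H q' = ∑ q ∈ Tx, mm k H (FPtail q) :=
          Finset.sum_image hinj
        have hsum_len : ∑ q' ∈ T', q'.edges.length = ∑ q ∈ Tx, (FPtail q).edges.length :=
          Finset.sum_image hinj
        have htail_len : ∀ q ∈ Tx, (FPtail q).edges.length = q.edges.length - 1 := by
          intro q hq
          obtain ⟨-, -, hqe⟩ := fp_head_decomp q x (Finset.mem_filter.1 hq).2
          rw [hqe]; simp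
        -- the inductive hypothesis applies to T'
        have hbound : ∑ q' ∈ T', q'.edges.length < n := by
          rw [hsum_len]
          have hlt1 : ∑ q ∈ Tx, (FPtail q).edges.length < ∑ q ∈ Tx, q.edges.length := by
            refine Finset.sum_lt_sum_of_nonempty hTxne ?_
            intro q hq
            rw [htail_len q hq]
            have := h2 q (hTxsub hq)
            omega
          have hle2 : ∑ q ∈ Tx, q.edges.length ≤ ∑ q ∈ T, q.edges.length :=
            Finset.sum_le_sum_of_subset hTxsub
          omega
        have h1' : ∀ q' ∈ T', q'.1 = H.tgt x := by
          intro q' hq'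
          obtain ⟨q, hq, rfl⟩ := Finset.mem_image.1 hq'
          exact (fp_head_decomp q x (Finset.mem_filter.1 hq).2).2.1
        have h2' : ∀ q' ∈ T', 0 < q'.edges.length := by
          intro q' hq'
          obtain ⟨q, hq, rfl⟩ := Finset.mem_image.1 hq'
          rw [htail_len q hq]
          have := hlen2 q hq
          omega
        have h3' : ∀ p' ∈ T', ∀ q' ∈ T', p'.edges <+: q'.edges → p' = q' := by
          intro p' hp' q' hq' hpre
          obtain ⟨p, hp, rfl⟩ := Finset.mem_image.1 hp'
          obtain ⟨q, hq, rfl⟩ := Finset.mem_image.1 hq'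
          obtain ⟨-, -, hpe⟩ := fp_head_decomp p x (Finset.mem_filter.1 hp).2
          obtain ⟨-, -, hqe⟩ := fp_head_decomp q x (Finset.mem_filter.1 hq).2
          have : p.edges <+: q.edges := by
            rw [hpe, hqe]
            exact (List.cons_prefix_cons).2 ⟨rfl, hpre⟩
          rw [h3 p (hTxsub hp) q (hTxsub hq) this]
        have h4' : ∀ p' ∈ T', ∀ (i : ℕ) (hi : i < p'.edges.length) (x' : H.E),
            H.src x' = H.src (p'.edges.get ⟨i, hi⟩) →
            ∃ q' ∈ T', (p'.edges.take i ++ [x']) <+: q'.edges := by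
          intro p' hp' i hi x' hsrc
          obtain ⟨p, hp, rfl⟩ := Finset.mem_image.1 hp'
          obtain ⟨-, -, hpe⟩ := fp_head_decomp p x (Finset.mem_filter.1 hp).2
          have hi1 : i + 1 < p.edges.length := by rw [hpe]; simpa using hi
          have hget : p.edges.get ⟨i + 1, hi1⟩ = (FPtail p).edges.get ⟨i, hi⟩ := by
            have := List.get_of_eq hpe (⟨i + 1, hi1⟩ : Fin p.edges.length)
            rw [this]
            simp
          obtain ⟨q, hq, hpre⟩ := h4 p (hTxsub hp) (i + 1) hi1 x' (by rw [hget]; exact hsrc)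
          have htake : p.edges.take (i + 1) = x :: (FPtail p).edges.take i := by
            rw [hpe]; rfl
          rw [htake] at hpre
          have hqh : q.edges.head? = some x := by
            obtain ⟨t2, ht2⟩ := hpre
            rw [← ht2]; rfl
          have hqTx : q ∈ Tx := Finset.mem_filter.2 ⟨hq, hqh⟩
          refine ⟨FPtail q, Finset.mem_image.2 ⟨q, hqTx, rfl⟩, ?_⟩
          obtain ⟨-, -, hqe⟩ := fp_head_decomp q x hqh
          obtain ⟨t2, ht2⟩ := hpre
          rw [hqe] at ht2
          refine ⟨t2, ?_⟩
          have := List.tail_eq_of_cons_eq ht2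
          simpa using this
        have hne' : T'.Nonempty := hTxne.image _
        have hIH := ih (H.tgt x) T' hbound h1' h2' h3' h4' hne'
        -- put the fiber sum together
        have hsum_tx : ∑ q ∈ Tx, mm k H q =
            LX k H (Sum.inr (Sum.inl x)) * (∑ q' ∈ T', mm k H q') *
              LX k H (Sum.inr (Sum.inr x)) := by
          rw [hsum_img, Finset.mul_sum, Finset.sum_mul]
          refine Finset.sum_congr rfl ?_
          intro q hq
          exact mm_head k H q x (Finset.mem_filter.1 hq).2
        rw [hsum_tx, hIH, LX_edge_tgt]
    rw [Finset.sum_congr rfl hper]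
    exact LX_ck2 k H w hSfin hSne

end LPGraph
namespace LPGraph

variable {G H : LPGraph}

/-- The vertex map induced by a path homomorphism. -/
def fvtx (f : G.FP → H.FP) (v : G.V) : H.V := (f (FP.ofVertex v)).1

theorem fvtx_spec {f : G.FP → H.FP} (hf : IsPathHom f) (v : G.V) :
    f (FP.ofVertex v) = FP.ofVertex (fvtx f v) := by
  obtain ⟨w, hw⟩ := hf.1 v
  show f (FP.ofVertex v) = FP.ofVertex ((f (FP.ofVertex v)).1)
  rw [hw]
  rfl

theorem fvtx_inj {f : G.FP → H.FP} (hf : IsPathHom f) (hinj : VertexInjective f) :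
    Function.Injective (fvtx f) := by
  intro v v' h
  apply hinj
  show f (FP.ofVertex v) = f (FP.ofVertex v')
  rw [fvtx_spec hf, fvtx_spec hf, h]

theorem fvtx_src {f : G.FP → H.FP} (hf : IsPathHom f) (e : G.E) :
    (f (FP.ofEdge e)).1 = fvtx f (G.src e) := by
  have h := hf.2.1 (FP.ofEdge e)
  rw [show FP.src (FP.ofEdge e) = G.src e from rfl, fvtx_spec hf] at h
  exact (FP.ofVertex_inj h).symm

theorem fvtx_tgt {f : G.FP → H.FP} (hf : IsPathHom f) (e : G.E) :
    (f (FP.ofEdge e)).2.1 = fvtx f (G.tgt e) := by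
  have h := hf.2.2.1 (FP.ofEdge e)
  rw [show FP.tgt (FP.ofEdge e) = G.tgt e from rfl, fvtx_spec hf] at h
  exact (FP.ofVertex_inj h).symm

variable (k : Type) [Field k]

/-- The second Cuntz–Krieger relation holds for the images of the edges at a
regular vertex under a vertex-injective, monotone, regular path homomorphism. -/
theorem ck2_mm (f : G.FP → H.FP) (hf : IsPathHom f) (hreg : RegularHom f)
    (v : G.V) (hfin : {e : G.E | G.src e = v}.Finite)
    (hne : {e : G.E | G.src e = v}.Nonempty) :
    ∑ e ∈ hfin.toFinset, mm k H (f (FP.ofEdge e)) = LX k H (Sum.inl (fvtx f v)) := by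
  classical
  have hv : RegularV G v := ⟨hfin, hne⟩
  have hmain : RegCond f v →
      ∑ e ∈ hfin.toFinset, mm k H (f (FP.ofEdge e)) = LX k H (Sum.inl (fvtx f v)) := by
    rintro ⟨hinjOn, hiff⟩
    set T : Finset H.FP := hfin.toFinset.image (fun e => f (FP.ofEdge e)) with hT
    have hTm : ∀ q : H.FP, q ∈ T ↔ q ∈ EdgeImg f v := by
      intro q
      constructor
      · intro hq
        obtain ⟨e, he, rfl⟩ := Finset.mem_image.1 hq
        exact ⟨e, hfin.mem_toFinset.1 he, rfl⟩
      · rintro ⟨e, he, rfl⟩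
        exact Finset.mem_image.2 ⟨e, hfin.mem_toFinset.2 he, rfl⟩
    have hsum : ∑ q ∈ T, mm k H q = ∑ e ∈ hfin.toFinset, mm k H (f (FP.ofEdge e)) :=
      Finset.sum_image (fun e he e' he' h =>
        hinjOn (hfin.mem_toFinset.1 he) (hfin.mem_toFinset.1 he') h)
    rw [← hsum]
    have h1 : ∀ q ∈ T, q.1 = fvtx f v := by
      intro q hq
      obtain ⟨e, he, rfl⟩ := Finset.mem_image.1 hq
      rw [fvtx_src hf, hfin.mem_toFinset.1 he]
    have h2 : ∀ q ∈ T, 0 < q.edges.length := by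
      intro q hq
      exact ((hiff q).1 ((hTm q).1 hq)).1
    have h3 : ∀ p ∈ T, ∀ q ∈ T, p.edges <+: q.edges → p = q := by
      intro p hp q hq hpre
      obtain ⟨r, hr, hcomp⟩ := fp_exists_comp p.edges.length p q le_rfl
        (by show p.1 = q.1; rw [h1 p hp, h1 q hq]) hpre
      have hext := ((hiff p).1 ((hTm p).1 hp)).2.1
      have hr2 : r = FP.ofVertex (FP.tgt p) := by
        apply hext r hr
        rw [← hcomp]
        exact (hTm q).1 hq
      subst hr2
      rw [hcomp]
      exact (fp_comp_ofVertex p).symm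
    have h4 : ∀ p ∈ T, ∀ (i : ℕ) (hi : i < p.edges.length) (x : H.E),
        H.src x = H.src (p.edges.get ⟨i, hi⟩) →
        ∃ q ∈ T, (p.edges.take i ++ [x]) <+: q.edges := by
      intro p hp i hi x hx
      obtain ⟨q, hq, hpre⟩ := ((hiff p).1 ((hTm p).1 hp)).2.2 i hi x hx
      exact ⟨q, (hTm q).2 hq, hpre⟩
    have h5 : T.Nonempty := by
      obtain ⟨e, he⟩ := hne
      exact ⟨f (FP.ofEdge e), Finset.mem_image.2 ⟨e, hfin.mem_toFinset.2 he, rfl⟩⟩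
    exact keyB k H ((∑ q ∈ T, q.edges.length) + 1) (fvtx f v) T (Nat.lt_succ_self _)
      h1 h2 h3 h4 h5
  by_cases h0v : Reg0V G v
  · rcases (hreg v hv).2 h0v with hrc | hsing
    · exact hmain hrc
    · obtain ⟨e₀, hset, htgt⟩ := h0v
      have hfin_eq : hfin.toFinset = {e₀} := by
        ext x
        rw [hfin.mem_toFinset, Finset.mem_singleton]
        have := Set.ext_iff.mp hset x
        simpa using this
      rw [hfin_eq, Finset.sum_singleton]
      have hsrce₀ : G.src e₀ = v := by
        have := Set.ext_iff.mp hset e₀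
        simpa using this.mpr rfl
      have he₀ : f (FP.ofEdge e₀) = f (FP.ofVertex v) := by
        have hmem : f (FP.ofEdge e₀) ∈ EdgeImg f v := ⟨e₀, hsrce₀, rfl⟩
        rw [hsing] at hmem
        exact hmem
      rw [he₀, fvtx_spec hf]
      exact mm_ofVertex k H (fvtx f v)
  · exact hmain ((hreg v hv).1 h0v)

/-- Generators of the Cohn/Leavitt algebra as finite paths of the extended graph. -/
def genFP (G : LPGraph) : Gen G → G.ext.FP
  | Sum.inl v => FP.ofVertex (G := G.ext) v
  | Sum.inr (Sum.inl e) => FP.ofEdge (G := G.ext) (Sum.inl e)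
  | Sum.inr (Sum.inr e) => FP.ofEdge (G := G.ext) (Sum.inr e)

theorem el_genFP (g : Gen G) : leavittPathElem k (genFP G g) = LX k G g := by
  rcases g with v | e | e
  · rfl
  · rw [el_eq_elP]
    show LX k G (genOfExtEdge (G := G) (Sum.inl e)) *
      LX k G (Sum.inl (G.ext.tgt (Sum.inl e))) = _
    erw [LX_absorbR, genOfExtEdge_inl]
  · rw [el_eq_elP]
    show LX k G (genOfExtEdge (G := G) (Sum.inr e)) *
      LX k G (Sum.inl (G.ext.tgt (Sum.inr e))) = _
    erw [LX_absorbR, genOfExtEdge_inr]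

theorem lhom_ext (φ ψ : LeavittAlg k G →ₐ[k] LeavittAlg k H)
    (h : ∀ g : Gen G, φ (LX k G g) = ψ (LX k G g)) : φ = ψ := by
  have h2 : φ.comp (RingQuot.mkAlgHom k (LeavittRel k G)) =
      ψ.comp (RingQuot.mkAlgHom k (LeavittRel k G)) := by
    apply FreeAlgebra.hom_ext
    funext g
    exact h g
  apply AlgHom.ext
  intro x
  obtain ⟨a, rfl⟩ := RingQuot.mkAlgHom_surjective k (LeavittRel k G) x
  exact DFunLike.congr_fun h2 a

end LPGraph
namespace LPGraph

variable {G H : LPGraph} (k : Type) [Field k]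

/-- The images of the generators under the induced map. -/
noncomputable def gfn (fbar : G.ext.FP → H.ext.FP) : Gen G → LeavittAlg k H :=
  fun g => leavittPathElem k (fbar (genFP G g))

theorem main_construction (f : G.FP → H.FP) (fbar : G.ext.FP → H.ext.FP)
    (hf : IsPathHom f) (hvi : VertexInjective f) (hmono : EdgeMonotone f)
    (hreg : RegularHom f) (hbar : IsBar f fbar) :
    ∃ φ : LeavittAlg k G →ₐ[k] LeavittAlg k H,
      ∀ p : G.ext.FP, φ (leavittPathElem k p) = leavittPathElem k (fbar p) := by
  classical
  obtain ⟨hbarhom, hbarvtx, hbarinl, hbarinr⟩ := hbar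
  have hfbv : ∀ v : G.V, fbar (FP.ofVertex (G := G.ext) v) =
      FP.ofVertex (G := H.ext) ((fvtx f v : H.V)) := by
    intro v
    exact hbarvtx v (fvtx f v) (fvtx_spec hf v)
  have hgfv : ∀ v : G.V, gfn k fbar (Sum.inl v) = LX k H (Sum.inl (fvtx f v)) := by
    intro v
    show leavittPathElem k (fbar (FP.ofVertex (G := G.ext) v)) = _
    erw [hfbv v, el_ofVertex]
  have hgfe : ∀ e : G.E, gfn k fbar (Sum.inr (Sum.inl e)) =
      elP k H (f (FP.ofEdge e)).2.2.inclExt := by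
    intro e
    show leavittPathElem k (fbar (FP.ofEdge (G := G.ext) (Sum.inl e))) = _
    rw [hbarinl e, el_inclExt]
  have hgfs : ∀ e : G.E, gfn k fbar (Sum.inr (Sum.inr e)) =
      elP k H (f (FP.ofEdge e)).2.2.star := by
    intro e
    show leavittPathElem k (fbar (FP.ofEdge (G := G.ext) (Sum.inr e))) = _
    rw [hbarinr e, el_star]
  have hrel : ∀ ⦃x y : FreeAlgebra k (Gen G)⦄, LeavittRel k G x y →
      (FreeAlgebra.lift k (gfn k fbar)) x = (FreeAlgebra.lift k (gfn k fbar)) y := by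
    rintro x y (hc | ⟨v, hfin, hne, rfl, rfl⟩)
    · cases hc with
      | vtx v w =>
        erw [map_mul, FreeAlgebra.lift_ι_apply, FreeAlgebra.lift_ι_apply, hgfv, hgfv]
        by_cases h : v = w
        · subst h
          erw [if_pos rfl, FreeAlgebra.lift_ι_apply, hgfv, LX_vtx_self]
        · rw [if_neg h, map_zero, LX_vtx_ne k H (fun hc => h (fvtx_inj hf hvi hc))]
      | src_edge e =>
        erw [map_mul, FreeAlgebra.lift_ι_apply, FreeAlgebra.lift_ι_apply, hgfv, hgfe,
          ← fvtx_src hf e]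
        exact elP_absorbL k H _
      | edge_tgt e =>
        erw [map_mul, FreeAlgebra.lift_ι_apply, FreeAlgebra.lift_ι_apply, hgfe, hgfv,
          ← fvtx_tgt hf e]
        exact elP_absorbR k H _
      | tgt_star e =>
        erw [map_mul, FreeAlgebra.lift_ι_apply, FreeAlgebra.lift_ι_apply, hgfv, hgfs,
          ← fvtx_tgt hf e]
        exact elP_absorbL k H _
      | star_src e =>
        erw [map_mul, FreeAlgebra.lift_ι_apply, FreeAlgebra.lift_ι_apply, hgfs, hgfv,
          ← fvtx_src hf e]
        exact elP_absorbR k H _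
      | cohn e e' =>
        erw [map_mul, FreeAlgebra.lift_ι_apply, FreeAlgebra.lift_ι_apply, hgfs, hgfe]
        by_cases h : e = e'
        · subst h
          erw [if_pos rfl, FreeAlgebra.lift_ι_apply, hgfv, elP_ck1, fvtx_tgt hf e]
        · rw [if_neg h, map_zero]
          apply elP_orth
          intro hsrc
          constructor
          · intro hpre
            exact h (hmono e e' (fp_le_of_prefix _ _ hsrc hpre))
          · intro hpre
            exact h ((hmono e' e (fp_le_of_prefix _ _ hsrc.symm hpre)).symm)
    · erw [map_sum, FreeAlgebra.lift_ι_apply, hgfv]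
      calc ∑ e ∈ hfin.toFinset, (FreeAlgebra.lift k (gfn k fbar))
            (FreeAlgebra.ι k (Sum.inr (Sum.inl e)) * FreeAlgebra.ι k (Sum.inr (Sum.inr e)))
          = ∑ e ∈ hfin.toFinset, mm k H (f (FP.ofEdge e)) := by
            refine Finset.sum_congr rfl fun e _ => ?_
            erw [map_mul, FreeAlgebra.lift_ι_apply, FreeAlgebra.lift_ι_apply, hgfe, hgfs]
            rfl
        _ = LX k H (Sum.inl (fvtx f v)) := ck2_mm k f hf hreg v hfin hne
  refine ⟨RingQuot.liftAlgHom k ⟨FreeAlgebra.lift k (gfn k fbar), hrel⟩, ?_⟩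
  have hφmk : ∀ a : FreeAlgebra k (Gen G),
      (RingQuot.liftAlgHom k ⟨FreeAlgebra.lift k (gfn k fbar), hrel⟩)
        (RingQuot.mkAlgHom k (LeavittRel k G) a) = (FreeAlgebra.lift k (gfn k fbar)) a :=
    fun a => RingQuot.liftAlgHom_mkAlgHom_apply k _ _ _
  have hφgen : ∀ g : Gen G,
      (RingQuot.liftAlgHom k ⟨FreeAlgebra.lift k (gfn k fbar), hrel⟩) (LX k G g) =
        gfn k fbar g := by
    intro g
    rw [show LX k G g = RingQuot.mkAlgHom k (LeavittRel k G) (FreeAlgebra.ι k g) from rfl,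
      hφmk, FreeAlgebra.lift_ι_apply]
  intro p
  obtain ⟨a, b, pp⟩ := p
  induction pp with
  | nil =>
    rename_i v
    exact hφgen (Sum.inl v)
  | cons x pp' ih =>
    rename_i w
    have hdec : (⟨G.ext.src x, w, Path.cons x pp'⟩ : G.ext.FP) =
        FP.comp (FP.ofEdge (G := G.ext) x) ⟨G.ext.tgt x, w, pp'⟩ rfl := rfl
    erw [hdec, el_comp, map_mul, ih]
    obtain ⟨h', hcomp⟩ := hbarhom.2.2.2 (FP.ofEdge (G := G.ext) x) ⟨G.ext.tgt x, w, pp'⟩ rfl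
    rw [hcomp, el_comp]
    congr 1
    have hedge : leavittPathElem k (FP.ofEdge (G := G.ext) x) = LX k G (genOfExtEdge x) := by
      cases x with
      | inl e => exact el_genFP k (Sum.inr (Sum.inl e))
      | inr e => exact el_genFP k (Sum.inr (Sum.inr e))
    rw [hedge]
    refine (hφgen (genOfExtEdge x)).trans ?_
    cases x with
    | inl e => rfl
    | inr e => rfl

end LPGraph
open LPGraph in
/-- The Leavitt path algebra construction is covariantly functorial on graphs
and vertex-injective, monotone, regular path homomorphisms: the map
`f_*^L : L_k(E) → L_k(F)` given by `[χ_p] ↦ [χ_{f̄(p)}]` is a well-defined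
(unique) algebra homomorphism; in particular
`Σ_{e ∈ s⁻¹(v)} [χ_{f̄(e)}][χ_{f̄(e)*}] = [χ_{f(v)}]` for every regular vertex
`v`; the assignment is functorial, and unital when restricted to graphs with
finitely many vertices and maps bijective on vertices. -/
theorem leavitt_algebra_functor (k : Type) [Field k] :
    (∀ (G H : LPGraph) (f : G.FP → H.FP) (fbar : G.ext.FP → H.ext.FP),
      IsPathHom f → VertexInjective f → EdgeMonotone f → RegularHom f → IsBar f fbar →
      (∃! φ : LeavittAlg k G →ₐ[k] LeavittAlg k H,
        ∀ p : G.ext.FP, φ (leavittPathElem k p) = leavittPathElem k (fbar p)) ∧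
      (∀ (v : G.V) (hv : RegularV G v),
        ∑ e ∈ hv.1.toFinset,
            leavittPathElem k (FP.inclExt (f (FP.ofEdge e))) *
              leavittPathElem k (FP.star (f (FP.ofEdge e))) =
          leavittPathElem k (FP.inclExt (f (FP.ofVertex v))))) ∧
    (∀ (G H K : LPGraph) (f : G.FP → H.FP) (g : H.FP → K.FP)
      (fbar : G.ext.FP → H.ext.FP) (gbar : H.ext.FP → K.ext.FP)
      (φf : LeavittAlg k G →ₐ[k] LeavittAlg k H) (φg : LeavittAlg k H →ₐ[k] LeavittAlg k K),
      IsPathHom f → VertexInjective f → EdgeMonotone f → RegularHom f → IsBar f fbar →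
      IsPathHom g → VertexInjective g → EdgeMonotone g → RegularHom g → IsBar g gbar →
      (∀ p : G.ext.FP, φf (leavittPathElem k p) = leavittPathElem k (fbar p)) →
      (∀ p : H.ext.FP, φg (leavittPathElem k p) = leavittPathElem k (gbar p)) →
      ∀ p : G.ext.FP, (φg.comp φf) (leavittPathElem k p) = leavittPathElem k (gbar (fbar p))) ∧
    (∀ (G H : LPGraph), ∀ [Fintype G.V] [Fintype H.V],
      ∀ (f : G.FP → H.FP) (fbar : G.ext.FP → H.ext.FP),
      IsPathHom f → VertexInjective f → EdgeMonotone f → RegularHom f → IsBar f fbar →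
      (∀ w : H.V, ∃ v : G.V, f (FP.ofVertex v) = FP.ofVertex w) →
      ∀ φ : LeavittAlg k G →ₐ[k] LeavittAlg k H,
        (∀ p : G.ext.FP, φ (leavittPathElem k p) = leavittPathElem k (fbar p)) →
        φ (∑ v : G.V, leavittPathElem k (FP.ofVertex (G := G.ext) v)) =
          ∑ w : H.V, leavittPathElem k (FP.ofVertex (G := H.ext) w)) := by
  constructor
  · intro G H f fbar hf hvi hmono hreg hbar
    obtain ⟨φ, hφ⟩ := main_construction k f fbar hf hvi hmono hreg hbar
    constructor
    · refine ⟨φ, hφ, ?_⟩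
      intro ψ hψ
      apply lhom_ext
      intro g
      rw [← el_genFP k g, hψ, hφ]
    · intro v hv
      have hs : ∀ e : G.E,
          leavittPathElem k (FP.inclExt (f (FP.ofEdge e))) *
            leavittPathElem k (FP.star (f (FP.ofEdge e))) = mm k H (f (FP.ofEdge e)) := by
        intro e
        rw [el_inclExt, el_star]
        rfl
      rw [Finset.sum_congr rfl (fun e _ => hs e), ck2_mm k f hf hreg v hv.1 hv.2,
        fvtx_spec hf v]
      rfl
  constructor
  · intro G H K f g fbar gbar φf φg _ _ _ _ _ _ _ _ _ _ hφf hφg p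
    rw [AlgHom.comp_apply, hφf, hφg]
  · intro G H _ _ f fbar hf hvi hmono hreg hbar hsurj φ hφ
    rw [map_sum]
    have hterm : ∀ v : G.V, φ (leavittPathElem k (FP.ofVertex (G := G.ext) v)) =
        leavittPathElem k (FP.ofVertex (G := H.ext) ((fvtx f v : H.V))) := by
      intro v
      rw [hφ]
      congr 1
      exact hbar.2.1 v (fvtx f v) (fvtx_spec hf v)
    rw [Finset.sum_congr rfl (fun v _ => hterm v)]
    have hbij : Function.Bijective (fvtx f) := by
      refine ⟨fvtx_inj hf hvi, ?_⟩
      intro w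
      obtain ⟨v, hv⟩ := hsurj w
      exact ⟨v, FP.ofVertex_inj (by rw [← fvtx_spec hf, hv])⟩
    exact Fintype.sum_bijective (fvtx f) hbij _ _ (fun v => rfl)
end
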